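/- For all x ≥ 1/2, Erfc(x) ≤ e^{−x²}/6 + e^{−4x²/3}/2, where Erfc(x) = (2/√π)∫_x^∞ e^{−t²} dt. -/

import Mathlib

open MeasureTheory Set

/- ### Generic exponential bounds -/

lemma cds18sum8 (u : ℝ) : ∑ m ∈ Finset.range 8, u ^ m / m.factorial =
    1+u+u^2/2+u^3/6+u^4/24+u^5/120+u^6/720+u^7/5040 := by
  simp [Finset.sum_range_succ, Nat.factorial]

lemma cds18sum7 (u : ℝ) : ∑ m ∈ Finset.range 7, u ^ m / m.factorial =
    1+u+u^2/2+u^3/6+u^4/24+u^5/120+u^6/720 := by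
  simp [Finset.sum_range_succ, Nat.factorial]

lemma exp_neg_upper1 {u r : ℝ} (h0 : 0 ≤ u)
    (hr : 1 ≤ (1+u+u^2/2+u^3/6+u^4/24+u^5/120+u^6/720+u^7/5040) * r) : Real.exp (-u) ≤ r := by
  have hs : 1+u+u^2/2+u^3/6+u^4/24+u^5/120+u^6/720+u^7/5040 ≤ Real.exp u := by
    rw [← cds18sum8]; exact Real.sum_le_exp_of_nonneg h0 8
  have hp : (0:ℝ) < 1+u+u^2/2+u^3/6+u^4/24+u^5/120+u^6/720+u^7/5040 := by positivity
  rw [Real.exp_neg]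
  rw [inv_le_iff_one_le_mul₀ (Real.exp_pos u)]
  nlinarith [Real.exp_pos u]

lemma exp_neg_lower1 {u r : ℝ} (h0 : 0 ≤ u) (h1 : u ≤ 1) (hr0 : 0 ≤ r)
    (hr : (1+u+u^2/2+u^3/6+u^4/24+u^5/120+u^6/720+u^7/4410) * r ≤ 1) : r ≤ Real.exp (-u) := by
  have hs : Real.exp u ≤ 1+u+u^2/2+u^3/6+u^4/24+u^5/120+u^6/720+u^7/4410 := by
    have := Real.exp_bound' h0 h1 (n := 7) (by norm_num)
    rw [cds18sum7] at this
    calc Real.exp u ≤ _ := this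
      _ = _ := by norm_num [Nat.factorial]; ring
  have hp : (0:ℝ) < Real.exp u := Real.exp_pos u
  rcases hr0.eq_or_lt with h|h
  · exact h ▸ (Real.exp_pos _).le
  · rw [Real.exp_neg, ← one_div, le_div_iff₀ hp]; nlinarith

/- ### Bounds on 2/√π -/

lemma cds18sqrt_pi_lb : (1.7724526:ℝ) ≤ Real.sqrt Real.pi := by
  rw [show (1.7724526:ℝ) = Real.sqrt (1.7724526^2) from (Real.sqrt_sq (by norm_num)).symm]
  apply Real.sqrt_le_sqrt
  nlinarith [Real.pi_gt_d6]

lemma cds18sqrt_pi_ub : Real.sqrt Real.pi ≤ 1.7724541 := by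
  rw [show (1.7724541:ℝ) = Real.sqrt (1.7724541^2) from (Real.sqrt_sq (by norm_num)).symm]
  apply Real.sqrt_le_sqrt
  nlinarith [Real.pi_lt_d6]

lemma q_up : 2 / Real.sqrt Real.pi ≤ 1.12838 := by
  rw [div_le_iff₀ (by positivity)]
  nlinarith [cds18sqrt_pi_lb]

lemma q_lo : (1.12837:ℝ) ≤ 2 / Real.sqrt Real.pi := by
  rw [le_div_iff₀ (by positivity)]
  nlinarith [cds18sqrt_pi_ub, Real.sqrt_nonneg Real.pi]

/- ### bracket bounds on pieces -/

lemma piece_lb {a b t r : ℝ} (ha : 0 ≤ a) (hat : a ≤ t) (htb : t ≤ b)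
    (hr0 : 0 ≤ r) (hr : r ≤ Real.exp (-(b^2/3))) :
    a/3 + 4*a/3*r ≤ t/3 + 4*t/3 * Real.exp (-(t^2/3)) := by
  have h1 : Real.exp (-(b^2/3)) ≤ Real.exp (-(t^2/3)) := Real.exp_le_exp.2 (by nlinarith)
  nlinarith [Real.exp_pos (-(t^2/3))]

lemma piece_ub {a b t r : ℝ} (ha : 0 ≤ a) (hat : a ≤ t) (htb : t ≤ b)
    (hr : Real.exp (-(a^2/3)) ≤ r) :
    t/3 + 4*t/3 * Real.exp (-(t^2/3)) ≤ b/3 + 4*b/3*r := by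
  have h1 : Real.exp (-(t^2/3)) ≤ Real.exp (-(a^2/3)) := Real.exp_le_exp.2 (by nlinarith)
  have h2 := Real.exp_pos (-(t^2/3))
  nlinarith

/- ### integrability and exact integrals -/

lemma integrable_gauss1 : Integrable (fun t : ℝ => Real.exp (-t^2)) := by
  simpa using integrable_exp_neg_mul_sq (b:=1) one_pos

lemma integrable_B : Integrable (fun t : ℝ =>
    t/3 * Real.exp (-t^2) + 4*t/3 * Real.exp (-4*t^2/3)) := by
  apply Integrable.add
  · have h := (integrable_mul_exp_neg_mul_sq (b := 1) one_pos).const_mul (1/3 : ℝ)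
    apply h.congr
    filter_upwards with t
    ring_nf
  · have h := (integrable_mul_exp_neg_mul_sq (b := 4/3) (by norm_num)).const_mul (4/3 : ℝ)
    apply h.congr
    filter_upwards with t
    ring_nf

lemma tendsto_exp_neg_sq_zero (c : ℝ) (hc : 0 < c) :
    Filter.Tendsto (fun t : ℝ => Real.exp (-(c*t^2))) Filter.atTop (nhds 0) := by
  apply Real.tendsto_exp_atBot.comp
  have h1 : Filter.Tendsto (fun t : ℝ => c*t^2) Filter.atTop Filter.atTop := by
    apply Filter.Tendsto.const_mul_atTop hc
    exact Filter.tendsto_pow_atTop (by norm_num)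
  exact Filter.tendsto_neg_atTop_atBot.comp h1

lemma int_texp (a b : ℝ) (hb : 0 < b) :
    ∫ t in Ioi a, t * Real.exp (-(b*t^2)) = Real.exp (-(b*a^2)) / (2*b) := by
  have hderiv : ∀ t ∈ Ici a, HasDerivAt (fun t : ℝ => -Real.exp (-(b*t^2)) / (2*b))
      (t * Real.exp (-(b*t^2))) t := by
    intro t _
    have h1 : HasDerivAt (fun t : ℝ => -(b*t^2)) (-(b*(2*t))) t := by
      exact (((hasDerivAt_pow 2 t).const_mul b).neg).congr_deriv (by norm_num)
    have h2 := (Real.hasDerivAt_exp _).comp t h1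
    have h3 : HasDerivAt (fun x => -((Real.exp ∘ fun t => -(b*t^2)) x / (2*b))) _ t := (h2.div_const (2*b)).neg
    convert h3 using 1
    · ext s
      simp [Function.comp, neg_div]
    have h4 : -(Real.exp (-(b * t ^ 2)) * -(b * (2 * t)) / (2 * b)) =
        (2*b) * (t * Real.exp (-(b*t^2))) / (2*b) := by ring
    rw [h4, mul_div_cancel_left₀ _ (by positivity : (2*b:ℝ) ≠ 0)]
  have hint : IntegrableOn (fun t : ℝ => t * Real.exp (-(b*t^2))) (Ioi a) := by
    have := integrable_mul_exp_neg_mul_sq hb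
    apply Integrable.integrableOn
    apply this.congr
    filter_upwards with t
    ring_nf
  have htend : Filter.Tendsto (fun t : ℝ => -Real.exp (-(b*t^2)) / (2*b)) Filter.atTop (nhds 0) := by
    have := ((tendsto_exp_neg_sq_zero b hb).neg).div_const (2*b)
    simpa using this
  have := MeasureTheory.integral_Ioi_of_hasDerivAt_of_tendsto' hderiv hint htend
  rw [this]
  field_simp
  ring

lemma int_B (a : ℝ) :
    ∫ t in Ioi a, (t/3 * Real.exp (-t^2) + 4*t/3 * Real.exp (-4*t^2/3)) =
      Real.exp (-a^2)/6 + Real.exp (-4*a^2/3)/2 := by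
  have h1 : ∫ t in Ioi a, t * Real.exp (-(1*t^2)) = Real.exp (-(1*a^2)) / (2*1) :=
    int_texp a 1 one_pos
  have h2 : ∫ t in Ioi a, t * Real.exp (-(4/3*t^2)) = Real.exp (-(4/3*a^2)) / (2*(4/3)) :=
    int_texp a (4/3) (by norm_num)
  have e1 : IntegrableOn (fun t : ℝ => t * Real.exp (-(1*t^2))) (Ioi a) := by
    exact ((integrable_mul_exp_neg_mul_sq one_pos).congr
      (by filter_upwards with t; ring_nf)).integrableOn
  have e2 : IntegrableOn (fun t : ℝ => t * Real.exp (-(4/3*t^2))) (Ioi a) := by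
    exact ((integrable_mul_exp_neg_mul_sq (b:=4/3) (by norm_num)).congr
      (by filter_upwards with t; ring_nf)).integrableOn
  have key : ∫ t in Ioi a, (t/3 * Real.exp (-t^2) + 4*t/3 * Real.exp (-4*t^2/3)) =
      (1/3) * (∫ t in Ioi a, t * Real.exp (-(1*t^2))) +
      (4/3) * (∫ t in Ioi a, t * Real.exp (-(4/3*t^2))) := by
    rw [← integral_const_mul, ← integral_const_mul,
      ← integral_add (e1.const_mul _) (e2.const_mul _)]
    apply setIntegral_congr_fun measurableSet_Ioi
    intro t _
    ring_nf
  rw [key, h1, h2]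
  ring_nf

/- ### splitting integrals -/

lemma Ioi_split (f : ℝ → ℝ) {a b : ℝ} (hab : a ≤ b)
    (hf : IntegrableOn f (Ioi a)) :
    ∫ t in Ioi a, f t = (∫ t in Ioc a b, f t) + ∫ t in Ioi b, f t := by
  rw [← Ioc_union_Ioi_eq_Ioi hab]
  rw [MeasureTheory.setIntegral_union _ measurableSet_Ioi
    (hf.mono_set (by rw [← Ioc_union_Ioi_eq_Ioi hab]; exact subset_union_left))
    (hf.mono_set (by rw [← Ioc_union_Ioi_eq_Ioi hab]; exact subset_union_right))]
  rw [Set.disjoint_left]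
  intro x hx hx'
  exact absurd hx'.out (not_lt.2 hx.2)

lemma Ioc_split (f : ℝ → ℝ) {a b c : ℝ} (hab : a ≤ b) (hbc : b ≤ c)
    (hf : IntegrableOn f (Ioc a c)) :
    ∫ t in Ioc a c, f t = (∫ t in Ioc a b, f t) + ∫ t in Ioc b c, f t := by
  rw [← Ioc_union_Ioc_eq_Ioc hab hbc]
  rw [MeasureTheory.setIntegral_union _ measurableSet_Ioc
    (hf.mono_set (by rw [← Ioc_union_Ioc_eq_Ioc hab hbc]; exact subset_union_left))
    (hf.mono_set (by rw [← Ioc_union_Ioc_eq_Ioc hab hbc]; exact subset_union_right))]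
  rw [Set.disjoint_left]
  intro x hx hx'
  exact absurd hx'.1 (not_lt.2 hx.2)

/- ### Gaussian piece upper bound -/

lemma exp_sq_piece (a b : ℝ) (ha : 0 < a) (hw : a < b) :
    ∫ t in Ioc a b, Real.exp (-t^2) ≤
      Real.exp (-a^2) * (1 - Real.exp (-(2*a*(b-a)))) / (2*a) := by
  have c1 : Continuous (fun t : ℝ => Real.exp (a^2 - 2*a*t)) :=
    Real.continuous_exp.comp (continuous_const.sub (continuous_const.mul continuous_id))
  have key : ∫ t in Ioc a b, Real.exp (-t^2) ≤ ∫ t in Ioc a b, Real.exp (a^2 - 2*a*t) := by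
    refine setIntegral_mono_on integrable_gauss1.integrableOn c1.integrableOn_Ioc
        measurableSet_Ioc ?_
    intro t ht
    apply Real.exp_le_exp.2
    nlinarith [sq_nonneg (t - a)]
  have hval : ∫ t in Ioc a b, Real.exp (a^2 - 2*a*t) =
      Real.exp (-a^2) * (1 - Real.exp (-(2*a*(b-a)))) / (2*a) := by
    rw [← intervalIntegral.integral_of_le hw.le]
    have hd : ∀ t ∈ Set.uIcc a b, HasDerivAt (fun t : ℝ => -Real.exp (a^2 - 2*a*t) / (2*a))
        (Real.exp (a^2 - 2*a*t)) t := by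
      intro t _
      have h1 : HasDerivAt (fun t : ℝ => a^2 - 2*a*t) (-(2*a)) t := by
        simpa using ((hasDerivAt_id t).const_mul (2*a)).const_sub (a^2)
      have h2 := (Real.hasDerivAt_exp _).comp t h1
      have h3 : HasDerivAt (fun x => -((Real.exp ∘ fun t => a^2 - 2*a*t) x / (2*a))) _ t := (h2.div_const (2*a)).neg
      convert h3 using 1
      · ext s
        simp [Function.comp, neg_div]
      have h4 : -(Real.exp (a ^ 2 - 2 * a * t) * -(2 * a) / (2 * a)) =
          (2*a) * Real.exp (a ^ 2 - 2*a*t) / (2*a) := by ring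
      rw [h4, mul_div_cancel_left₀ _ (by positivity : (2*a:ℝ) ≠ 0)]
    rw [intervalIntegral.integral_eq_sub_of_hasDerivAt hd]
    · rw [Real.exp_neg]
      have e1 : Real.exp (a^2 - 2*a*b) = Real.exp (a^2 - 2*a*a) * Real.exp (-(2*a*(b-a))) := by
        rw [← Real.exp_add]; ring_nf
      rw [e1]
      have e2 : Real.exp (a^2 - 2*a*a) = (Real.exp (a^2))⁻¹ := by
        rw [← Real.exp_neg]; ring_nf
      rw [e2]
      have := Real.exp_pos (a^2)
      field_simp
      ring
    · exact c1.intervalIntegrable _ _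
  rw [hval] at key
  exact key


lemma cds18L1 : (0.76337949:ℝ) ≤ Real.exp (-((0.9:ℝ)^2/3)) :=
  exp_neg_lower1 (by norm_num) (by norm_num) (by norm_num) (by norm_num)

lemma cds18L2 : (0.7165313:ℝ) ≤ Real.exp (-((1:ℝ)^2/3)) :=
  exp_neg_lower1 (by norm_num) (by norm_num) (by norm_num) (by norm_num)

lemma cds18L3 : (0.66808935:ℝ) ≤ Real.exp (-((1.1:ℝ)^2/3)) :=
  exp_neg_lower1 (by norm_num) (by norm_num) (by norm_num) (by norm_num)

lemma cds18L4 : (0.59402526:ℝ) ≤ Real.exp (-((1.25:ℝ)^2/3)) :=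
  exp_neg_lower1 (by norm_num) (by norm_num) (by norm_num) (by norm_num)

lemma cds18L5 : (0.49617146:ℝ) ≤ Real.exp (-((1.45:ℝ)^2/3)) :=
  exp_neg_lower1 (by norm_num) (by norm_num) (by norm_num) (by norm_num)

lemma cds18L6 : (0.38161851:ℝ) ≤ Real.exp (-((1.7:ℝ)^2/3)) :=
  exp_neg_lower1 (by norm_num) (by norm_num) (by norm_num) (by norm_num)

lemma cds18L7 : (0.26359696:ℝ) ≤ Real.exp (-((2:ℝ)^2/3)) := by
  have h : Real.exp (-((2:ℝ)^2/3)) = Real.exp (-(((2:ℝ)^2/3)/2)) ^ (2:ℕ) := by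
    rw [← Real.exp_nat_mul]; norm_num
  have h2 : (0.51341695:ℝ) ≤ Real.exp (-(((2:ℝ)^2/3)/2)) :=
    exp_neg_lower1 (by norm_num) (by norm_num) (by norm_num) (by norm_num)
  rw [h]
  calc (0.26359696:ℝ) ≤ (0.51341695:ℝ)^(2:ℕ) := by norm_num
    _ ≤ _ := pow_le_pow_left₀ (by norm_num) h2 2

lemma cds18L8 : (0.18498114:ℝ) ≤ Real.exp (-((2.25:ℝ)^2/3)) := by
  have h : Real.exp (-((2.25:ℝ)^2/3)) = Real.exp (-(((2.25:ℝ)^2/3)/2)) ^ (2:ℕ) := by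
    rw [← Real.exp_nat_mul]; norm_num
  have h2 : (0.43009434:ℝ) ≤ Real.exp (-(((2.25:ℝ)^2/3)/2)) :=
    exp_neg_lower1 (by norm_num) (by norm_num) (by norm_num) (by norm_num)
  rw [h]
  calc (0.18498114:ℝ) ≤ (0.43009434:ℝ)^(2:ℕ) := by norm_num
    _ ≤ _ := pow_le_pow_left₀ (by norm_num) h2 2

lemma cds18L9 : (0.13522242:ℝ) ≤ Real.exp (-((2.45:ℝ)^2/3)) := by
  have h : Real.exp (-((2.45:ℝ)^2/3)) = Real.exp (-(((2.45:ℝ)^2/3)/3)) ^ (3:ℕ) := by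
    rw [← Real.exp_nat_mul]; norm_num
  have h2 : (0.51327436:ℝ) ≤ Real.exp (-(((2.45:ℝ)^2/3)/3)) :=
    exp_neg_lower1 (by norm_num) (by norm_num) (by norm_num) (by norm_num)
  rw [h]
  calc (0.13522242:ℝ) ≤ (0.51327436:ℝ)^(3:ℕ) := by norm_num
    _ ≤ _ := pow_le_pow_left₀ (by norm_num) h2 3

lemma cds18L10 : (0.10504831:ℝ) ≤ Real.exp (-((2.6:ℝ)^2/3)) := by
  have h : Real.exp (-((2.6:ℝ)^2/3)) = Real.exp (-(((2.6:ℝ)^2/3)/3)) ^ (3:ℕ) := by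
    rw [← Real.exp_nat_mul]; norm_num
  have h2 : (0.47184175:ℝ) ≤ Real.exp (-(((2.6:ℝ)^2/3)/3)) :=
    exp_neg_lower1 (by norm_num) (by norm_num) (by norm_num) (by norm_num)
  rw [h]
  calc (0.10504831:ℝ) ≤ (0.47184175:ℝ)^(3:ℕ) := by norm_num
    _ ≤ _ := pow_le_pow_left₀ (by norm_num) h2 3

lemma cds18L11 : (0.08039241:ℝ) ≤ Real.exp (-((2.75:ℝ)^2/3)) := by
  have h : Real.exp (-((2.75:ℝ)^2/3)) = Real.exp (-(((2.75:ℝ)^2/3)/3)) ^ (3:ℕ) := by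
    rw [← Real.exp_nat_mul]; norm_num
  have h2 : (0.43159032:ℝ) ≤ Real.exp (-(((2.75:ℝ)^2/3)/3)) :=
    exp_neg_lower1 (by norm_num) (by norm_num) (by norm_num) (by norm_num)
  rw [h]
  calc (0.08039241:ℝ) ≤ (0.43159032:ℝ)^(3:ℕ) := by norm_num
    _ ≤ _ := pow_le_pow_left₀ (by norm_num) h2 3

lemma cds18L12 : (0.06060758:ℝ) ≤ Real.exp (-((2.9:ℝ)^2/3)) := by
  have h : Real.exp (-((2.9:ℝ)^2/3)) = Real.exp (-(((2.9:ℝ)^2/3)/3)) ^ (3:ℕ) := by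
    rw [← Real.exp_nat_mul]; norm_num
  have h2 : (0.39280378:ℝ) ≤ Real.exp (-(((2.9:ℝ)^2/3)/3)) :=
    exp_neg_lower1 (by norm_num) (by norm_num) (by norm_num) (by norm_num)
  rw [h]
  calc (0.06060758:ℝ) ≤ (0.39280378:ℝ)^(3:ℕ) := by norm_num
    _ ≤ _ := pow_le_pow_left₀ (by norm_num) h2 3

lemma cds18L13 : (0.04501157:ℝ) ≤ Real.exp (-((3.05:ℝ)^2/3)) := by
  have h : Real.exp (-((3.05:ℝ)^2/3)) = Real.exp (-(((3.05:ℝ)^2/3)/4)) ^ (4:ℕ) := by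
    rw [← Real.exp_nat_mul]; norm_num
  have h2 : (0.46060754:ℝ) ≤ Real.exp (-(((3.05:ℝ)^2/3)/4)) :=
    exp_neg_lower1 (by norm_num) (by norm_num) (by norm_num) (by norm_num)
  rw [h]
  calc (0.04501157:ℝ) ≤ (0.46060754:ℝ)^(4:ℕ) := by norm_num
    _ ≤ _ := pow_le_pow_left₀ (by norm_num) h2 4

lemma cds18L14 : (0.03293115:ℝ) ≤ Real.exp (-((3.2:ℝ)^2/3)) := by
  have h : Real.exp (-((3.2:ℝ)^2/3)) = Real.exp (-(((3.2:ℝ)^2/3)/4)) ^ (4:ℕ) := by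
    rw [← Real.exp_nat_mul]; norm_num
  have h2 : (0.42599228:ℝ) ≤ Real.exp (-(((3.2:ℝ)^2/3)/4)) :=
    exp_neg_lower1 (by norm_num) (by norm_num) (by norm_num) (by norm_num)
  rw [h]
  calc (0.03293115:ℝ) ≤ (0.42599228:ℝ)^(4:ℕ) := by norm_num
    _ ≤ _ := pow_le_pow_left₀ (by norm_num) h2 4

lemma cds18L15 : (0.02120887:ℝ) ≤ Real.exp (-((3.4:ℝ)^2/3)) := by
  have h : Real.exp (-((3.4:ℝ)^2/3)) = Real.exp (-(((3.4:ℝ)^2/3)/4)) ^ (4:ℕ) := by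
    rw [← Real.exp_nat_mul]; norm_num
  have h2 : (0.38161851:ℝ) ≤ Real.exp (-(((3.4:ℝ)^2/3)/4)) :=
    exp_neg_lower1 (by norm_num) (by norm_num) (by norm_num) (by norm_num)
  rw [h]
  calc (0.02120887:ℝ) ≤ (0.38161851:ℝ)^(4:ℕ) := by norm_num
    _ ≤ _ := pow_le_pow_left₀ (by norm_num) h2 4

lemma cds18U16 : Real.exp (-((0.5:ℝ)^2/3)) ≤ (0.92004442:ℝ) :=
  exp_neg_upper1 (by norm_num) (by norm_num)

lemma cds18U17 : Real.exp (-((0.65:ℝ)^2/3)) ≤ (0.86863408:ℝ) :=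
  exp_neg_upper1 (by norm_num) (by norm_num)

lemma cds18U18 : Real.exp (-((0.72:ℝ)^2/3)) ≤ (0.84130586:ℝ) :=
  exp_neg_upper1 (by norm_num) (by norm_num)

lemma cds18U19 : Real.exp (-((0.76:ℝ)^2/3)) ≤ (0.82486683:ℝ) :=
  exp_neg_upper1 (by norm_num) (by norm_num)

lemma cds18U20 : Real.exp (-((0.78:ℝ)^2/3)) ≤ (0.81644152:ℝ) :=
  exp_neg_upper1 (by norm_num) (by norm_num)

lemma cds18L21 : (0.78597261:ℝ) ≤ Real.exp (-((0.85:ℝ)^2/3)) :=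
  exp_neg_lower1 (by norm_num) (by norm_num) (by norm_num) (by norm_num)

lemma cds18U22 : Real.exp (-((0.79:ℝ)^2)) ≤ (0.53574356:ℝ) :=
  exp_neg_upper1 (by norm_num) (by norm_num)

lemma cds18U23 : Real.exp (-((0.5:ℝ)^2)) ≤ (0.77880079:ℝ) :=
  exp_neg_upper1 (by norm_num) (by norm_num)

lemma cds18L24 : (0.95122942:ℝ) ≤ Real.exp (-(2*(0.5:ℝ)*((0.55:ℝ)-(0.5:ℝ)))) :=
  exp_neg_lower1 (by norm_num) (by norm_num) (by norm_num) (by norm_num)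

lemma cds18U25 : Real.exp (-((0.55:ℝ)^2)) ≤ (0.73896849:ℝ) :=
  exp_neg_upper1 (by norm_num) (by norm_num)

lemma cds18L26 : (0.94648514:ℝ) ≤ Real.exp (-(2*(0.55:ℝ)*((0.6:ℝ)-(0.55:ℝ)))) :=
  exp_neg_lower1 (by norm_num) (by norm_num) (by norm_num) (by norm_num)

lemma cds18U27 : Real.exp (-((0.6:ℝ)^2)) ≤ (0.69767633:ℝ) :=
  exp_neg_upper1 (by norm_num) (by norm_num)

lemma cds18L28 : (0.94176453:ℝ) ≤ Real.exp (-(2*(0.6:ℝ)*((0.65:ℝ)-(0.6:ℝ)))) :=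
  exp_neg_lower1 (by norm_num) (by norm_num) (by norm_num) (by norm_num)

lemma cds18U29 : Real.exp (-((0.65:ℝ)^2)) ≤ (0.65540627:ℝ) :=
  exp_neg_upper1 (by norm_num) (by norm_num)

lemma cds18L30 : (0.93706746:ℝ) ≤ Real.exp (-(2*(0.65:ℝ)*((0.7:ℝ)-(0.65:ℝ)))) :=
  exp_neg_lower1 (by norm_num) (by norm_num) (by norm_num) (by norm_num)

lemma cds18U31 : Real.exp (-((0.7:ℝ)^2)) ≤ (0.61262643:ℝ) :=
  exp_neg_upper1 (by norm_num) (by norm_num)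

lemma cds18L32 : (0.93239381:ℝ) ≤ Real.exp (-(2*(0.7:ℝ)*((0.75:ℝ)-(0.7:ℝ)))) :=
  exp_neg_lower1 (by norm_num) (by norm_num) (by norm_num) (by norm_num)

lemma cds18U33 : Real.exp (-((0.75:ℝ)^2)) ≤ (0.56978292:ℝ) :=
  exp_neg_upper1 (by norm_num) (by norm_num)

lemma cds18L34 : (0.94176453:ℝ) ≤ Real.exp (-(2*(0.75:ℝ)*((0.79:ℝ)-(0.75:ℝ)))) :=
  exp_neg_lower1 (by norm_num) (by norm_num) (by norm_num) (by norm_num)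

lemma cds18U35 : Real.exp (-((0.85:ℝ)^2)) ≤ (0.48553737:ℝ) :=
  exp_neg_upper1 (by norm_num) (by norm_num)

lemma cds18L36 : (0.91851228:ℝ) ≤ Real.exp (-(2*(0.85:ℝ)*((0.9:ℝ)-(0.85:ℝ)))) :=
  exp_neg_lower1 (by norm_num) (by norm_num) (by norm_num) (by norm_num)

lemma cds18U37 : Real.exp (-((0.9:ℝ)^2)) ≤ (0.44485907:ℝ) :=
  exp_neg_upper1 (by norm_num) (by norm_num)

lemma cds18L38 : (0.91393118:ℝ) ≤ Real.exp (-(2*(0.9:ℝ)*((0.95:ℝ)-(0.9:ℝ)))) :=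
  exp_neg_lower1 (by norm_num) (by norm_num) (by norm_num) (by norm_num)

lemma cds18U39 : Real.exp (-((0.95:ℝ)^2)) ≤ (0.4055565:ℝ) :=
  exp_neg_upper1 (by norm_num) (by norm_num)

lemma cds18L40 : (0.90937293:ℝ) ≤ Real.exp (-(2*(0.95:ℝ)*((1:ℝ)-(0.95:ℝ)))) :=
  exp_neg_lower1 (by norm_num) (by norm_num) (by norm_num) (by norm_num)

lemma cds18U41 : Real.exp (-((1:ℝ)^2)) ≤ (0.36788322:ℝ) :=
  exp_neg_upper1 (by norm_num) (by norm_num)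

lemma cds18L42 : (0.90483741:ℝ) ≤ Real.exp (-(2*(1:ℝ)*((1.05:ℝ)-(1:ℝ)))) :=
  exp_neg_lower1 (by norm_num) (by norm_num) (by norm_num) (by norm_num)

lemma cds18U43 : Real.exp (-((1.05:ℝ)^2)) ≤ (0.33204004:ℝ) := by
  have h : Real.exp (-((1.05:ℝ)^2)) = Real.exp (-(((1.05:ℝ)^2)/2)) ^ (2:ℕ) := by
    rw [← Real.exp_nat_mul]; norm_num
  have h2 : Real.exp (-(((1.05:ℝ)^2)/2)) ≤ (0.57622915:ℝ) :=
    exp_neg_upper1 (by norm_num) (by norm_num)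
  rw [h]
  calc Real.exp (-(((1.05:ℝ)^2)/2)) ^ (2:ℕ) ≤ (0.57622915:ℝ)^(2:ℕ) :=
      pow_le_pow_left₀ (Real.exp_pos _).le h2 2
    _ ≤ (0.33204004:ℝ) := by norm_num

lemma cds18L44 : (0.90032452:ℝ) ≤ Real.exp (-(2*(1.05:ℝ)*((1.1:ℝ)-(1.05:ℝ)))) :=
  exp_neg_lower1 (by norm_num) (by norm_num) (by norm_num) (by norm_num)

lemma cds18U45 : Real.exp (-((1.1:ℝ)^2)) ≤ (0.29819744:ℝ) := by
  have h : Real.exp (-((1.1:ℝ)^2)) = Real.exp (-(((1.1:ℝ)^2)/2)) ^ (2:ℕ) := by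
    rw [← Real.exp_nat_mul]; norm_num
  have h2 : Real.exp (-(((1.1:ℝ)^2)/2)) ≤ (0.54607457:ℝ) :=
    exp_neg_upper1 (by norm_num) (by norm_num)
  rw [h]
  calc Real.exp (-(((1.1:ℝ)^2)/2)) ^ (2:ℕ) ≤ (0.54607457:ℝ)^(2:ℕ) :=
      pow_le_pow_left₀ (Real.exp_pos _).le h2 2
    _ ≤ (0.29819744:ℝ) := by norm_num

lemma cds18L46 : (0.89583413:ℝ) ≤ Real.exp (-(2*(1.1:ℝ)*((1.15:ℝ)-(1.1:ℝ)))) :=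
  exp_neg_lower1 (by norm_num) (by norm_num) (by norm_num) (by norm_num)

lemma cds18U47 : Real.exp (-((1.15:ℝ)^2)) ≤ (0.26646858:ℝ) := by
  have h : Real.exp (-((1.15:ℝ)^2)) = Real.exp (-(((1.15:ℝ)^2)/2)) ^ (2:ℕ) := by
    rw [← Real.exp_nat_mul]; norm_num
  have h2 : Real.exp (-(((1.15:ℝ)^2)/2)) ≤ (0.51620594:ℝ) :=
    exp_neg_upper1 (by norm_num) (by norm_num)
  rw [h]
  calc Real.exp (-(((1.15:ℝ)^2)/2)) ^ (2:ℕ) ≤ (0.51620594:ℝ)^(2:ℕ) :=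
      pow_le_pow_left₀ (Real.exp_pos _).le h2 2
    _ ≤ (0.26646858:ℝ) := by norm_num

lemma cds18L48 : (0.89136614:ℝ) ≤ Real.exp (-(2*(1.15:ℝ)*((1.2:ℝ)-(1.15:ℝ)))) :=
  exp_neg_lower1 (by norm_num) (by norm_num) (by norm_num) (by norm_num)

lemma cds18U49 : Real.exp (-((1.2:ℝ)^2)) ≤ (0.23692822:ℝ) := by
  have h : Real.exp (-((1.2:ℝ)^2)) = Real.exp (-(((1.2:ℝ)^2)/2)) ^ (2:ℕ) := by
    rw [← Real.exp_nat_mul]; norm_num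
  have h2 : Real.exp (-(((1.2:ℝ)^2)/2)) ≤ (0.48675272:ℝ) :=
    exp_neg_upper1 (by norm_num) (by norm_num)
  rw [h]
  calc Real.exp (-(((1.2:ℝ)^2)/2)) ^ (2:ℕ) ≤ (0.48675272:ℝ)^(2:ℕ) :=
      pow_le_pow_left₀ (Real.exp_pos _).le h2 2
    _ ≤ (0.23692822:ℝ) := by norm_num

lemma cds18L50 : (0.88692043:ℝ) ≤ Real.exp (-(2*(1.2:ℝ)*((1.25:ℝ)-(1.2:ℝ)))) :=
  exp_neg_lower1 (by norm_num) (by norm_num) (by norm_num) (by norm_num)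

lemma cds18U51 : Real.exp (-((1.25:ℝ)^2)) ≤ (0.20961212:ℝ) := by
  have h : Real.exp (-((1.25:ℝ)^2)) = Real.exp (-(((1.25:ℝ)^2)/2)) ^ (2:ℕ) := by
    rw [← Real.exp_nat_mul]; norm_num
  have h2 : Real.exp (-(((1.25:ℝ)^2)/2)) ≤ (0.45783416:ℝ) :=
    exp_neg_upper1 (by norm_num) (by norm_num)
  rw [h]
  calc Real.exp (-(((1.25:ℝ)^2)/2)) ^ (2:ℕ) ≤ (0.45783416:ℝ)^(2:ℕ) :=
      pow_le_pow_left₀ (Real.exp_pos _).le h2 2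
    _ ≤ (0.20961212:ℝ) := by norm_num

lemma cds18L52 : (0.8824969:ℝ) ≤ Real.exp (-(2*(1.25:ℝ)*((1.3:ℝ)-(1.25:ℝ)))) :=
  exp_neg_lower1 (by norm_num) (by norm_num) (by norm_num) (by norm_num)

lemma cds18U53 : Real.exp (-((1.3:ℝ)^2)) ≤ (0.18452066:ℝ) := by
  have h : Real.exp (-((1.3:ℝ)^2)) = Real.exp (-(((1.3:ℝ)^2)/2)) ^ (2:ℕ) := by
    rw [← Real.exp_nat_mul]; norm_num
  have h2 : Real.exp (-(((1.3:ℝ)^2)/2)) ≤ (0.42955867:ℝ) :=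
    exp_neg_upper1 (by norm_num) (by norm_num)
  rw [h]
  calc Real.exp (-(((1.3:ℝ)^2)/2)) ^ (2:ℕ) ≤ (0.42955867:ℝ)^(2:ℕ) :=
      pow_le_pow_left₀ (Real.exp_pos _).le h2 2
    _ ≤ (0.18452066:ℝ) := by norm_num

lemma cds18L54 : (0.87809543:ℝ) ≤ Real.exp (-(2*(1.3:ℝ)*((1.35:ℝ)-(1.3:ℝ)))) :=
  exp_neg_lower1 (by norm_num) (by norm_num) (by norm_num) (by norm_num)

lemma cds18U55 : Real.exp (-((1.35:ℝ)^2)) ≤ (0.16162291:ℝ) := by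
  have h : Real.exp (-((1.35:ℝ)^2)) = Real.exp (-(((1.35:ℝ)^2)/2)) ^ (2:ℕ) := by
    rw [← Real.exp_nat_mul]; norm_num
  have h2 : Real.exp (-(((1.35:ℝ)^2)/2)) ≤ (0.40202351:ℝ) :=
    exp_neg_upper1 (by norm_num) (by norm_num)
  rw [h]
  calc Real.exp (-(((1.35:ℝ)^2)/2)) ^ (2:ℕ) ≤ (0.40202351:ℝ)^(2:ℕ) :=
      pow_le_pow_left₀ (Real.exp_pos _).le h2 2
    _ ≤ (0.16162291:ℝ) := by norm_num

lemma cds18L56 : (0.87371591:ℝ) ≤ Real.exp (-(2*(1.35:ℝ)*((1.4:ℝ)-(1.35:ℝ)))) :=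
  exp_neg_lower1 (by norm_num) (by norm_num) (by norm_num) (by norm_num)

lemma cds18U57 : Real.exp (-((1.4:ℝ)^2)) ≤ (0.14086093:ℝ) := by
  have h : Real.exp (-((1.4:ℝ)^2)) = Real.exp (-(((1.4:ℝ)^2)/2)) ^ (2:ℕ) := by
    rw [← Real.exp_nat_mul]; norm_num
  have h2 : Real.exp (-(((1.4:ℝ)^2)/2)) ≤ (0.37531443:ℝ) :=
    exp_neg_upper1 (by norm_num) (by norm_num)
  rw [h]
  calc Real.exp (-(((1.4:ℝ)^2)/2)) ^ (2:ℕ) ≤ (0.37531443:ℝ)^(2:ℕ) :=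
      pow_le_pow_left₀ (Real.exp_pos _).le h2 2
    _ ≤ (0.14086093:ℝ) := by norm_num

lemma cds18L58 : (0.86935823:ℝ) ≤ Real.exp (-(2*(1.4:ℝ)*((1.45:ℝ)-(1.4:ℝ)))) :=
  exp_neg_lower1 (by norm_num) (by norm_num) (by norm_num) (by norm_num)

lemma cds18U59 : Real.exp (-((1.45:ℝ)^2)) ≤ (0.12215097:ℝ) := by
  have h : Real.exp (-((1.45:ℝ)^2)) = Real.exp (-(((1.45:ℝ)^2)/3)) ^ (3:ℕ) := by
    rw [← Real.exp_nat_mul]; norm_num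
  have h2 : Real.exp (-(((1.45:ℝ)^2)/3)) ≤ (0.49617205:ℝ) :=
    exp_neg_upper1 (by norm_num) (by norm_num)
  rw [h]
  calc Real.exp (-(((1.45:ℝ)^2)/3)) ^ (3:ℕ) ≤ (0.49617205:ℝ)^(3:ℕ) :=
      pow_le_pow_left₀ (Real.exp_pos _).le h2 3
    _ ≤ (0.12215097:ℝ) := by norm_num

lemma cds18L60 : (0.86502229:ℝ) ≤ Real.exp (-(2*(1.45:ℝ)*((1.5:ℝ)-(1.45:ℝ)))) :=
  exp_neg_lower1 (by norm_num) (by norm_num) (by norm_num) (by norm_num)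

lemma cds18U61 : Real.exp (-((1.5:ℝ)^2)) ≤ (0.10539964:ℝ) := by
  have h : Real.exp (-((1.5:ℝ)^2)) = Real.exp (-(((1.5:ℝ)^2)/3)) ^ (3:ℕ) := by
    rw [← Real.exp_nat_mul]; norm_num
  have h2 : Real.exp (-(((1.5:ℝ)^2)/3)) ≤ (0.47236716:ℝ) :=
    exp_neg_upper1 (by norm_num) (by norm_num)
  rw [h]
  calc Real.exp (-(((1.5:ℝ)^2)/3)) ^ (3:ℕ) ≤ (0.47236716:ℝ)^(3:ℕ) :=
      pow_le_pow_left₀ (Real.exp_pos _).le h2 3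
    _ ≤ (0.10539964:ℝ) := by norm_num

lemma cds18L62 : (0.86070797:ℝ) ≤ Real.exp (-(2*(1.5:ℝ)*((1.55:ℝ)-(1.5:ℝ)))) :=
  exp_neg_lower1 (by norm_num) (by norm_num) (by norm_num) (by norm_num)

lemma cds18U63 : Real.exp (-((1.55:ℝ)^2)) ≤ (0.09049201:ℝ) := by
  have h : Real.exp (-((1.55:ℝ)^2)) = Real.exp (-(((1.55:ℝ)^2)/3)) ^ (3:ℕ) := by
    rw [← Real.exp_nat_mul]; norm_num
  have h2 : Real.exp (-(((1.55:ℝ)^2)/3)) ≤ (0.44895561:ℝ) :=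
    exp_neg_upper1 (by norm_num) (by norm_num)
  rw [h]
  calc Real.exp (-(((1.55:ℝ)^2)/3)) ^ (3:ℕ) ≤ (0.44895561:ℝ)^(3:ℕ) :=
      pow_le_pow_left₀ (Real.exp_pos _).le h2 3
    _ ≤ (0.09049201:ℝ) := by norm_num

lemma cds18L64 : (0.85641517:ℝ) ≤ Real.exp (-(2*(1.55:ℝ)*((1.6:ℝ)-(1.55:ℝ)))) :=
  exp_neg_lower1 (by norm_num) (by norm_num) (by norm_num) (by norm_num)

lemma cds18U65 : Real.exp (-((1.6:ℝ)^2)) ≤ (0.07730551:ℝ) := by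
  have h : Real.exp (-((1.6:ℝ)^2)) = Real.exp (-(((1.6:ℝ)^2)/3)) ^ (3:ℕ) := by
    rw [← Real.exp_nat_mul]; norm_num
  have h2 : Real.exp (-(((1.6:ℝ)^2)/3)) ≤ (0.42599399:ℝ) :=
    exp_neg_upper1 (by norm_num) (by norm_num)
  rw [h]
  calc Real.exp (-(((1.6:ℝ)^2)/3)) ^ (3:ℕ) ≤ (0.42599399:ℝ)^(3:ℕ) :=
      pow_le_pow_left₀ (Real.exp_pos _).le h2 3
    _ ≤ (0.07730551:ℝ) := by norm_num

lemma cds18L66 : (0.85214378:ℝ) ≤ Real.exp (-(2*(1.6:ℝ)*((1.65:ℝ)-(1.6:ℝ)))) :=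
  exp_neg_lower1 (by norm_num) (by norm_num) (by norm_num) (by norm_num)

lemma cds18U67 : Real.exp (-((1.65:ℝ)^2)) ≤ (0.06571129:ℝ) := by
  have h : Real.exp (-((1.65:ℝ)^2)) = Real.exp (-(((1.65:ℝ)^2)/3)) ^ (3:ℕ) := by
    rw [← Real.exp_nat_mul]; norm_num
  have h2 : Real.exp (-(((1.65:ℝ)^2)/3)) ≤ (0.40353386:ℝ) :=
    exp_neg_upper1 (by norm_num) (by norm_num)
  rw [h]
  calc Real.exp (-(((1.65:ℝ)^2)/3)) ^ (3:ℕ) ≤ (0.40353386:ℝ)^(3:ℕ) :=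
      pow_le_pow_left₀ (Real.exp_pos _).le h2 3
    _ ≤ (0.06571129:ℝ) := by norm_num

lemma cds18L68 : (0.8478937:ℝ) ≤ Real.exp (-(2*(1.65:ℝ)*((1.7:ℝ)-(1.65:ℝ)))) :=
  exp_neg_lower1 (by norm_num) (by norm_num) (by norm_num) (by norm_num)

lemma cds18U69 : Real.exp (-((1.7:ℝ)^2)) ≤ (0.05557753:ℝ) := by
  have h : Real.exp (-((1.7:ℝ)^2)) = Real.exp (-(((1.7:ℝ)^2)/3)) ^ (3:ℕ) := by
    rw [← Real.exp_nat_mul]; norm_num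
  have h2 : Real.exp (-(((1.7:ℝ)^2)/3)) ≤ (0.3816217:ℝ) :=
    exp_neg_upper1 (by norm_num) (by norm_num)
  rw [h]
  calc Real.exp (-(((1.7:ℝ)^2)/3)) ^ (3:ℕ) ≤ (0.3816217:ℝ)^(3:ℕ) :=
      pow_le_pow_left₀ (Real.exp_pos _).le h2 3
    _ ≤ (0.05557753:ℝ) := by norm_num

lemma cds18L70 : (0.84366481:ℝ) ≤ Real.exp (-(2*(1.7:ℝ)*((1.75:ℝ)-(1.7:ℝ)))) :=
  exp_neg_lower1 (by norm_num) (by norm_num) (by norm_num) (by norm_num)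

lemma cds18U71 : Real.exp (-((1.75:ℝ)^2)) ≤ (0.04677091:ℝ) := by
  have h : Real.exp (-((1.75:ℝ)^2)) = Real.exp (-(((1.75:ℝ)^2)/4)) ^ (4:ℕ) := by
    rw [← Real.exp_nat_mul]; norm_num
  have h2 : Real.exp (-(((1.75:ℝ)^2)/4)) ≤ (0.46504388:ℝ) :=
    exp_neg_upper1 (by norm_num) (by norm_num)
  rw [h]
  calc Real.exp (-(((1.75:ℝ)^2)/4)) ^ (4:ℕ) ≤ (0.46504388:ℝ)^(4:ℕ) :=
      pow_le_pow_left₀ (Real.exp_pos _).le h2 4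
    _ ≤ (0.04677091:ℝ) := by norm_num

lemma cds18L72 : (0.83945702:ℝ) ≤ Real.exp (-(2*(1.75:ℝ)*((1.8:ℝ)-(1.75:ℝ)))) :=
  exp_neg_lower1 (by norm_num) (by norm_num) (by norm_num) (by norm_num)

lemma cds18U73 : Real.exp (-((1.8:ℝ)^2)) ≤ (0.03916425:ℝ) := by
  have h : Real.exp (-((1.8:ℝ)^2)) = Real.exp (-(((1.8:ℝ)^2)/4)) ^ (4:ℕ) := by
    rw [← Real.exp_nat_mul]; norm_num
  have h2 : Real.exp (-(((1.8:ℝ)^2)/4)) ≤ (0.44485907:ℝ) :=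
    exp_neg_upper1 (by norm_num) (by norm_num)
  rw [h]
  calc Real.exp (-(((1.8:ℝ)^2)/4)) ^ (4:ℕ) ≤ (0.44485907:ℝ)^(4:ℕ) :=
      pow_le_pow_left₀ (Real.exp_pos _).le h2 4
    _ ≤ (0.03916425:ℝ) := by norm_num

lemma cds18L74 : (0.83527021:ℝ) ≤ Real.exp (-(2*(1.8:ℝ)*((1.85:ℝ)-(1.8:ℝ)))) :=
  exp_neg_lower1 (by norm_num) (by norm_num) (by norm_num) (by norm_num)

lemma cds18U75 : Real.exp (-((1.85:ℝ)^2)) ≤ (0.0326312:ℝ) := by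
  have h : Real.exp (-((1.85:ℝ)^2)) = Real.exp (-(((1.85:ℝ)^2)/4)) ^ (4:ℕ) := by
    rw [← Real.exp_nat_mul]; norm_num
  have h2 : Real.exp (-(((1.85:ℝ)^2)/4)) ≤ (0.4250189:ℝ) :=
    exp_neg_upper1 (by norm_num) (by norm_num)
  rw [h]
  calc Real.exp (-(((1.85:ℝ)^2)/4)) ^ (4:ℕ) ≤ (0.4250189:ℝ)^(4:ℕ) :=
      pow_le_pow_left₀ (Real.exp_pos _).le h2 4
    _ ≤ (0.0326312:ℝ) := by norm_num

lemma cds18L76 : (0.83110428:ℝ) ≤ Real.exp (-(2*(1.85:ℝ)*((1.9:ℝ)-(1.85:ℝ)))) :=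
  exp_neg_lower1 (by norm_num) (by norm_num) (by norm_num) (by norm_num)

lemma cds18U77 : Real.exp (-((1.9:ℝ)^2)) ≤ (0.02705238:ℝ) := by
  have h : Real.exp (-((1.9:ℝ)^2)) = Real.exp (-(((1.9:ℝ)^2)/4)) ^ (4:ℕ) := by
    rw [← Real.exp_nat_mul]; norm_num
  have h2 : Real.exp (-(((1.9:ℝ)^2)/4)) ≤ (0.4055565:ℝ) :=
    exp_neg_upper1 (by norm_num) (by norm_num)
  rw [h]
  calc Real.exp (-(((1.9:ℝ)^2)/4)) ^ (4:ℕ) ≤ (0.4055565:ℝ)^(4:ℕ) :=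
      pow_le_pow_left₀ (Real.exp_pos _).le h2 4
    _ ≤ (0.02705238:ℝ) := by norm_num

lemma cds18L78 : (0.82695913:ℝ) ≤ Real.exp (-(2*(1.9:ℝ)*((1.95:ℝ)-(1.9:ℝ)))) :=
  exp_neg_lower1 (by norm_num) (by norm_num) (by norm_num) (by norm_num)

lemma cds18U79 : Real.exp (-((1.95:ℝ)^2)) ≤ (0.02231556:ℝ) := by
  have h : Real.exp (-((1.95:ℝ)^2)) = Real.exp (-(((1.95:ℝ)^2)/4)) ^ (4:ℕ) := by
    rw [← Real.exp_nat_mul]; norm_num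
  have h2 : Real.exp (-(((1.95:ℝ)^2)/4)) ≤ (0.38650215:ℝ) :=
    exp_neg_upper1 (by norm_num) (by norm_num)
  rw [h]
  calc Real.exp (-(((1.95:ℝ)^2)/4)) ^ (4:ℕ) ≤ (0.38650215:ℝ)^(4:ℕ) :=
      pow_le_pow_left₀ (Real.exp_pos _).le h2 4
    _ ≤ (0.02231556:ℝ) := by norm_num

lemma cds18L80 : (0.82283465:ℝ) ≤ Real.exp (-(2*(1.95:ℝ)*((2:ℝ)-(1.95:ℝ)))) :=
  exp_neg_lower1 (by norm_num) (by norm_num) (by norm_num) (by norm_num)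

lemma cds18U81 : Real.exp (-((2:ℝ)^2)) ≤ (0.0183164:ℝ) := by
  have h : Real.exp (-((2:ℝ)^2)) = Real.exp (-(((2:ℝ)^2)/4)) ^ (4:ℕ) := by
    rw [← Real.exp_nat_mul]; norm_num
  have h2 : Real.exp (-(((2:ℝ)^2)/4)) ≤ (0.36788322:ℝ) :=
    exp_neg_upper1 (by norm_num) (by norm_num)
  rw [h]
  calc Real.exp (-(((2:ℝ)^2)/4)) ^ (4:ℕ) ≤ (0.36788322:ℝ)^(4:ℕ) :=
      pow_le_pow_left₀ (Real.exp_pos _).le h2 4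
    _ ≤ (0.0183164:ℝ) := by norm_num

lemma cds18L82 : (0.81873075:ℝ) ≤ Real.exp (-(2*(2:ℝ)*((2.05:ℝ)-(2:ℝ)))) :=
  exp_neg_lower1 (by norm_num) (by norm_num) (by norm_num) (by norm_num)

lemma cds18U83 : Real.exp (-((2.05:ℝ)^2)) ≤ (0.01495836:ℝ) := by
  have h : Real.exp (-((2.05:ℝ)^2)) = Real.exp (-(((2.05:ℝ)^2)/5)) ^ (5:ℕ) := by
    rw [← Real.exp_nat_mul]; norm_num
  have h2 : Real.exp (-(((2.05:ℝ)^2)/5)) ≤ (0.43149599:ℝ) :=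
    exp_neg_upper1 (by norm_num) (by norm_num)
  rw [h]
  calc Real.exp (-(((2.05:ℝ)^2)/5)) ^ (5:ℕ) ≤ (0.43149599:ℝ)^(5:ℕ) :=
      pow_le_pow_left₀ (Real.exp_pos _).le h2 5
    _ ≤ (0.01495836:ℝ) := by norm_num

lemma cds18L84 : (0.81464731:ℝ) ≤ Real.exp (-(2*(2.05:ℝ)*((2.1:ℝ)-(2.05:ℝ)))) :=
  exp_neg_lower1 (by norm_num) (by norm_num) (by norm_num) (by norm_num)

lemma cds18U85 : Real.exp (-((2.1:ℝ)^2)) ≤ (0.01215544:ℝ) := by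
  have h : Real.exp (-((2.1:ℝ)^2)) = Real.exp (-(((2.1:ℝ)^2)/5)) ^ (5:ℕ) := by
    rw [← Real.exp_nat_mul]; norm_num
  have h2 : Real.exp (-(((2.1:ℝ)^2)/5)) ≤ (0.4139559:ℝ) :=
    exp_neg_upper1 (by norm_num) (by norm_num)
  rw [h]
  calc Real.exp (-(((2.1:ℝ)^2)/5)) ^ (5:ℕ) ≤ (0.4139559:ℝ)^(5:ℕ) :=
      pow_le_pow_left₀ (Real.exp_pos _).le h2 5
    _ ≤ (0.01215544:ℝ) := by norm_num

lemma cds18L86 : (0.81058424:ℝ) ≤ Real.exp (-(2*(2.1:ℝ)*((2.15:ℝ)-(2.1:ℝ)))) :=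
  exp_neg_lower1 (by norm_num) (by norm_num) (by norm_num) (by norm_num)

lemma cds18U87 : Real.exp (-((2.15:ℝ)^2)) ≤ (0.00982849:ℝ) := by
  have h : Real.exp (-((2.15:ℝ)^2)) = Real.exp (-(((2.15:ℝ)^2)/5)) ^ (5:ℕ) := by
    rw [← Real.exp_nat_mul]; norm_num
  have h2 : Real.exp (-(((2.15:ℝ)^2)/5)) ≤ (0.39673206:ℝ) :=
    exp_neg_upper1 (by norm_num) (by norm_num)
  rw [h]
  calc Real.exp (-(((2.15:ℝ)^2)/5)) ^ (5:ℕ) ≤ (0.39673206:ℝ)^(5:ℕ) :=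
      pow_le_pow_left₀ (Real.exp_pos _).le h2 5
    _ ≤ (0.00982849:ℝ) := by norm_num

lemma cds18L88 : (0.80654143:ℝ) ≤ Real.exp (-(2*(2.15:ℝ)*((2.2:ℝ)-(2.15:ℝ)))) :=
  exp_neg_lower1 (by norm_num) (by norm_num) (by norm_num) (by norm_num)

lemma cds18L89 : (0.77880078:ℝ) ≤ Real.exp (-((1/2:ℝ)^2)) :=
  exp_neg_lower1 (by norm_num) (by norm_num) (by norm_num) (by norm_num)

lemma cds18L90 : (0.7165313:ℝ) ≤ Real.exp (-(4*(1/2:ℝ)^2/3)) :=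
  exp_neg_lower1 (by norm_num) (by norm_num) (by norm_num) (by norm_num)

lemma cds18U91 : Real.exp (-((0.79:ℝ)^2)) ≤ (0.53574356:ℝ) :=
  exp_neg_upper1 (by norm_num) (by norm_num)

lemma cds18U92 : Real.exp (-(4*(0.79:ℝ)^2/3)) ≤ (0.43512123:ℝ) :=
  exp_neg_upper1 (by norm_num) (by norm_num)

lemma cds18L93 : (0.48553668:ℝ) ≤ Real.exp (-((0.85:ℝ)^2)) :=
  exp_neg_lower1 (by norm_num) (by norm_num) (by norm_num) (by norm_num)

lemma cds18L94 : (0.38161851:ℝ) ≤ Real.exp (-(4*(0.85:ℝ)^2/3)) :=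
  exp_neg_lower1 (by norm_num) (by norm_num) (by norm_num) (by norm_num)

lemma cds18U95 : Real.exp (-((2.2:ℝ)^2)) ≤ (0.00790738:ℝ) := by
  have h : Real.exp (-((2.2:ℝ)^2)) = Real.exp (-(((2.2:ℝ)^2)/5)) ^ (5:ℕ) := by
    rw [← Real.exp_nat_mul]; norm_num
  have h2 : Real.exp (-(((2.2:ℝ)^2)/5)) ≤ (0.37984505:ℝ) :=
    exp_neg_upper1 (by norm_num) (by norm_num)
  rw [h]
  calc Real.exp (-(((2.2:ℝ)^2)/5)) ^ (5:ℕ) ≤ (0.37984505:ℝ)^(5:ℕ) :=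
      pow_le_pow_left₀ (Real.exp_pos _).le h2 5
    _ ≤ (0.00790738:ℝ) := by norm_num

lemma cds18U96 : Real.exp (-(4*(2.2:ℝ)^2/3)) ≤ (0.00157533:ℝ) := by
  have h : Real.exp (-(4*(2.2:ℝ)^2/3)) = Real.exp (-((4*(2.2:ℝ)^2/3)/7)) ^ (7:ℕ) := by
    rw [← Real.exp_nat_mul]; norm_num
  have h2 : Real.exp (-((4*(2.2:ℝ)^2/3)/7)) ≤ (0.39776296:ℝ) :=
    exp_neg_upper1 (by norm_num) (by norm_num)
  rw [h]
  calc Real.exp (-((4*(2.2:ℝ)^2/3)/7)) ^ (7:ℕ) ≤ (0.39776296:ℝ)^(7:ℕ) :=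
      pow_le_pow_left₀ (Real.exp_pos _).le h2 7
    _ ≤ (0.00157533:ℝ) := by norm_num

lemma cds18ptP (t : ℝ) (ht : (0.85:ℝ) ≤ t) :
    2 / Real.sqrt Real.pi * Real.exp (-t^2) ≤ t/3 * Real.exp (-t^2) + 4*t/3 * Real.exp (-4*t^2/3) := by
  have hE : Real.exp (-4*t^2/3) = Real.exp (-t^2) * Real.exp (-(t^2/3)) := by
    rw [← Real.exp_add]; ring_nf
  rw [hE]
  have hq := q_up
  have hpos := Real.exp_pos (-t^2)
  have key : (1.12838:ℝ) ≤ t/3 + 4*t/3 * Real.exp (-(t^2/3)) := by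
    rcases le_or_gt t (0.9:ℝ) with h0|h0
    · refine le_trans (by norm_num) (piece_lb (a := (0.85:ℝ)) (by norm_num) ht h0 (by norm_num) cds18L1)
    rcases le_or_gt t (1:ℝ) with h1|h1
    · refine le_trans (by norm_num) (piece_lb (a := (0.9:ℝ)) (by norm_num) h0.le h1 (by norm_num) cds18L2)
    rcases le_or_gt t (1.1:ℝ) with h2|h2
    · refine le_trans (by norm_num) (piece_lb (a := (1:ℝ)) (by norm_num) h1.le h2 (by norm_num) cds18L3)
    rcases le_or_gt t (1.25:ℝ) with h3|h3
    · refine le_trans (by norm_num) (piece_lb (a := (1.1:ℝ)) (by norm_num) h2.le h3 (by norm_num) cds18L4)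
    rcases le_or_gt t (1.45:ℝ) with h4|h4
    · refine le_trans (by norm_num) (piece_lb (a := (1.25:ℝ)) (by norm_num) h3.le h4 (by norm_num) cds18L5)
    rcases le_or_gt t (1.7:ℝ) with h5|h5
    · refine le_trans (by norm_num) (piece_lb (a := (1.45:ℝ)) (by norm_num) h4.le h5 (by norm_num) cds18L6)
    rcases le_or_gt t (2:ℝ) with h6|h6
    · refine le_trans (by norm_num) (piece_lb (a := (1.7:ℝ)) (by norm_num) h5.le h6 (by norm_num) cds18L7)
    rcases le_or_gt t (2.25:ℝ) with h7|h7
    · refine le_trans (by norm_num) (piece_lb (a := (2:ℝ)) (by norm_num) h6.le h7 (by norm_num) cds18L8)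
    rcases le_or_gt t (2.45:ℝ) with h8|h8
    · refine le_trans (by norm_num) (piece_lb (a := (2.25:ℝ)) (by norm_num) h7.le h8 (by norm_num) cds18L9)
    rcases le_or_gt t (2.6:ℝ) with h9|h9
    · refine le_trans (by norm_num) (piece_lb (a := (2.45:ℝ)) (by norm_num) h8.le h9 (by norm_num) cds18L10)
    rcases le_or_gt t (2.75:ℝ) with h10|h10
    · refine le_trans (by norm_num) (piece_lb (a := (2.6:ℝ)) (by norm_num) h9.le h10 (by norm_num) cds18L11)
    rcases le_or_gt t (2.9:ℝ) with h11|h11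
    · refine le_trans (by norm_num) (piece_lb (a := (2.75:ℝ)) (by norm_num) h10.le h11 (by norm_num) cds18L12)
    rcases le_or_gt t (3.05:ℝ) with h12|h12
    · refine le_trans (by norm_num) (piece_lb (a := (2.9:ℝ)) (by norm_num) h11.le h12 (by norm_num) cds18L13)
    rcases le_or_gt t (3.2:ℝ) with h13|h13
    · refine le_trans (by norm_num) (piece_lb (a := (3.05:ℝ)) (by norm_num) h12.le h13 (by norm_num) cds18L14)
    rcases le_or_gt t (3.4:ℝ) with h14|h14
    · refine le_trans (by norm_num) (piece_lb (a := (3.2:ℝ)) (by norm_num) h13.le h14 (by norm_num) cds18L15)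
    · have h2 := Real.exp_pos (-(t^2/3))
      nlinarith
  nlinarith [Real.exp_pos (-(t^2/3))]

lemma cds18ptG0 (t : ℝ) (ht : t ∈ Ioc (1/2:ℝ) (0.79:ℝ)) :
    t/3 * Real.exp (-t^2) + 4*t/3 * Real.exp (-4*t^2/3) ≤ 2 / Real.sqrt Real.pi * Real.exp (-t^2) := by
  obtain ⟨ht1, ht2⟩ := ht
  have ht1' : (0.5:ℝ) ≤ t := by linarith
  have hE : Real.exp (-4*t^2/3) = Real.exp (-t^2) * Real.exp (-(t^2/3)) := by
    rw [← Real.exp_add]; ring_nf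
  rw [hE]
  have hq := q_lo
  have hpos := Real.exp_pos (-t^2)
  have key : t/3 + 4*t/3 * Real.exp (-(t^2/3)) ≤ (1.12837:ℝ) := by
    rcases le_or_gt t (0.65:ℝ) with g0|g0
    · refine le_trans (piece_ub (a := (0.5:ℝ)) (by norm_num) ht1' g0 cds18U16) (by norm_num)
    rcases le_or_gt t (0.72:ℝ) with g1|g1
    · refine le_trans (piece_ub (a := (0.65:ℝ)) (by norm_num) g0.le g1 cds18U17) (by norm_num)
    rcases le_or_gt t (0.76:ℝ) with g2|g2
    · refine le_trans (piece_ub (a := (0.72:ℝ)) (by norm_num) g1.le g2 cds18U18) (by norm_num)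
    rcases le_or_gt t (0.78:ℝ) with g3|g3
    · refine le_trans (piece_ub (a := (0.76:ℝ)) (by norm_num) g2.le g3 cds18U19) (by norm_num)
    · exact le_trans (piece_ub (a := (0.78:ℝ)) (by norm_num) g3.le ht2 cds18U20) (by norm_num)
  nlinarith [Real.exp_pos (-(t^2/3))]

lemma cds18ptSL (t : ℝ) (ht : t ∈ Ioc (0.79:ℝ) (0.85:ℝ)) :
    2 / Real.sqrt Real.pi * Real.exp (-t^2) - (t/3 * Real.exp (-t^2) + 4*t/3 * Real.exp (-4*t^2/3)) ≤ (0.01990583:ℝ) := by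
  obtain ⟨ht1, ht2⟩ := ht
  have hE : Real.exp (-4*t^2/3) = Real.exp (-t^2) * Real.exp (-(t^2/3)) := by
    rw [← Real.exp_add]; ring_nf
  rw [hE]
  have hq := q_up
  have hq0 : (0:ℝ) ≤ 2 / Real.sqrt Real.pi := by positivity
  have hbr := piece_lb (a := (0.79:ℝ)) (b := (0.85:ℝ)) (t := t) (by norm_num) ht1.le ht2 (by norm_num) cds18L21
  have heu : Real.exp (-t^2) ≤ (0.53574356:ℝ) := by
    refine le_trans (Real.exp_le_exp.2 ?_) cds18U22
    nlinarith
  nlinarith [Real.exp_pos (-t^2), Real.exp_pos (-(t^2/3)),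
    mul_le_mul_of_nonneg_left hbr (Real.exp_pos (-t^2)).le]

lemma cds18upL0 : ∫ t in Ioc (0.5:ℝ) (0.55:ℝ), Real.exp (-t^2) ≤ (0.03798257:ℝ) := by
  refine le_trans (exp_sq_piece 0.5 0.55 (by norm_num) (by norm_num)) ?_
  have h1 := cds18U23
  have h2 := cds18L24
  have h3 : Real.exp (-(2*(0.5:ℝ)*((0.55:ℝ)-(0.5:ℝ)))) ≤ 1 := by
    rw [← Real.exp_zero]; apply Real.exp_le_exp.2; norm_num
  have h4 : Real.exp (-(0.5:ℝ)^2) * (1 - Real.exp (-(2*(0.5:ℝ)*((0.55:ℝ)-(0.5:ℝ))))) ≤ (0.77880079:ℝ) * (1 - (0.95122942:ℝ)) :=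
    mul_le_mul h1 (by linarith) (by linarith) (by norm_num)
  norm_num at h4 ⊢
  linarith

lemma cds18upL1 : ∫ t in Ioc (0.55:ℝ) (0.6:ℝ), Real.exp (-t^2) ≤ (0.03595073:ℝ) := by
  refine le_trans (exp_sq_piece 0.55 0.6 (by norm_num) (by norm_num)) ?_
  have h1 := cds18U25
  have h2 := cds18L26
  have h3 : Real.exp (-(2*(0.55:ℝ)*((0.6:ℝ)-(0.55:ℝ)))) ≤ 1 := by
    rw [← Real.exp_zero]; apply Real.exp_le_exp.2; norm_num
  have h4 : Real.exp (-(0.55:ℝ)^2) * (1 - Real.exp (-(2*(0.55:ℝ)*((0.6:ℝ)-(0.55:ℝ))))) ≤ (0.73896849:ℝ) * (1 - (0.94648514:ℝ)) :=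
    mul_le_mul h1 (by linarith) (by linarith) (by norm_num)
  norm_num at h4 ⊢
  linarith

lemma cds18upL2 : ∫ t in Ioc (0.6:ℝ) (0.65:ℝ), Real.exp (-t^2) ≤ (0.03385793:ℝ) := by
  refine le_trans (exp_sq_piece 0.6 0.65 (by norm_num) (by norm_num)) ?_
  have h1 := cds18U27
  have h2 := cds18L28
  have h3 : Real.exp (-(2*(0.6:ℝ)*((0.65:ℝ)-(0.6:ℝ)))) ≤ 1 := by
    rw [← Real.exp_zero]; apply Real.exp_le_exp.2; norm_num
  have h4 : Real.exp (-(0.6:ℝ)^2) * (1 - Real.exp (-(2*(0.6:ℝ)*((0.65:ℝ)-(0.6:ℝ))))) ≤ (0.69767633:ℝ) * (1 - (0.94176453:ℝ)) :=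
    mul_le_mul h1 (by linarith) (by linarith) (by norm_num)
  norm_num at h4 ⊢
  linarith

lemma cds18upL3 : ∫ t in Ioc (0.65:ℝ) (0.7:ℝ), Real.exp (-t^2) ≤ (0.03172799:ℝ) := by
  refine le_trans (exp_sq_piece 0.65 0.7 (by norm_num) (by norm_num)) ?_
  have h1 := cds18U29
  have h2 := cds18L30
  have h3 : Real.exp (-(2*(0.65:ℝ)*((0.7:ℝ)-(0.65:ℝ)))) ≤ 1 := by
    rw [← Real.exp_zero]; apply Real.exp_le_exp.2; norm_num
  have h4 : Real.exp (-(0.65:ℝ)^2) * (1 - Real.exp (-(2*(0.65:ℝ)*((0.7:ℝ)-(0.65:ℝ))))) ≤ (0.65540627:ℝ) * (1 - (0.93706746:ℝ)) :=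
    mul_le_mul h1 (by linarith) (by linarith) (by norm_num)
  norm_num at h4 ⊢
  linarith

lemma cds18upL4 : ∫ t in Ioc (0.7:ℝ) (0.75:ℝ), Real.exp (-t^2) ≤ (0.02958382:ℝ) := by
  refine le_trans (exp_sq_piece 0.7 0.75 (by norm_num) (by norm_num)) ?_
  have h1 := cds18U31
  have h2 := cds18L32
  have h3 : Real.exp (-(2*(0.7:ℝ)*((0.75:ℝ)-(0.7:ℝ)))) ≤ 1 := by
    rw [← Real.exp_zero]; apply Real.exp_le_exp.2; norm_num
  have h4 : Real.exp (-(0.7:ℝ)^2) * (1 - Real.exp (-(2*(0.7:ℝ)*((0.75:ℝ)-(0.7:ℝ))))) ≤ (0.61262643:ℝ) * (1 - (0.93239381:ℝ)) :=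
    mul_le_mul h1 (by linarith) (by linarith) (by norm_num)
  norm_num at h4 ⊢
  linarith

lemma cds18upL5 : ∫ t in Ioc (0.75:ℝ) (0.79:ℝ), Real.exp (-t^2) ≤ (0.02212106:ℝ) := by
  refine le_trans (exp_sq_piece 0.75 0.79 (by norm_num) (by norm_num)) ?_
  have h1 := cds18U33
  have h2 := cds18L34
  have h3 : Real.exp (-(2*(0.75:ℝ)*((0.79:ℝ)-(0.75:ℝ)))) ≤ 1 := by
    rw [← Real.exp_zero]; apply Real.exp_le_exp.2; norm_num
  have h4 : Real.exp (-(0.75:ℝ)^2) * (1 - Real.exp (-(2*(0.75:ℝ)*((0.79:ℝ)-(0.75:ℝ))))) ≤ (0.56978292:ℝ) * (1 - (0.94176453:ℝ)) :=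
    mul_le_mul h1 (by linarith) (by linarith) (by norm_num)
  norm_num at h4 ⊢
  linarith

lemma cds18upR0 : ∫ t in Ioc (0.85:ℝ) (0.9:ℝ), Real.exp (-t^2) ≤ (0.02327373:ℝ) := by
  refine le_trans (exp_sq_piece 0.85 0.9 (by norm_num) (by norm_num)) ?_
  have h1 := cds18U35
  have h2 := cds18L36
  have h3 : Real.exp (-(2*(0.85:ℝ)*((0.9:ℝ)-(0.85:ℝ)))) ≤ 1 := by
    rw [← Real.exp_zero]; apply Real.exp_le_exp.2; norm_num
  have h4 : Real.exp (-(0.85:ℝ)^2) * (1 - Real.exp (-(2*(0.85:ℝ)*((0.9:ℝ)-(0.85:ℝ))))) ≤ (0.48553737:ℝ) * (1 - (0.91851228:ℝ)) :=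
    mul_le_mul h1 (by linarith) (by linarith) (by norm_num)
  norm_num at h4 ⊢
  linarith

lemma cds18upR1 : ∫ t in Ioc (0.9:ℝ) (0.95:ℝ), Real.exp (-t^2) ≤ (0.02127139:ℝ) := by
  refine le_trans (exp_sq_piece 0.9 0.95 (by norm_num) (by norm_num)) ?_
  have h1 := cds18U37
  have h2 := cds18L38
  have h3 : Real.exp (-(2*(0.9:ℝ)*((0.95:ℝ)-(0.9:ℝ)))) ≤ 1 := by
    rw [← Real.exp_zero]; apply Real.exp_le_exp.2; norm_num
  have h4 : Real.exp (-(0.9:ℝ)^2) * (1 - Real.exp (-(2*(0.9:ℝ)*((0.95:ℝ)-(0.9:ℝ))))) ≤ (0.44485907:ℝ) * (1 - (0.91393118:ℝ)) :=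
    mul_le_mul h1 (by linarith) (by linarith) (by norm_num)
  norm_num at h4 ⊢
  linarith

lemma cds18upR2 : ∫ t in Ioc (0.95:ℝ) (1:ℝ), Real.exp (-t^2) ≤ (0.01934442:ℝ) := by
  refine le_trans (exp_sq_piece 0.95 1 (by norm_num) (by norm_num)) ?_
  have h1 := cds18U39
  have h2 := cds18L40
  have h3 : Real.exp (-(2*(0.95:ℝ)*((1:ℝ)-(0.95:ℝ)))) ≤ 1 := by
    rw [← Real.exp_zero]; apply Real.exp_le_exp.2; norm_num
  have h4 : Real.exp (-(0.95:ℝ)^2) * (1 - Real.exp (-(2*(0.95:ℝ)*((1:ℝ)-(0.95:ℝ))))) ≤ (0.4055565:ℝ) * (1 - (0.90937293:ℝ)) :=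
    mul_le_mul h1 (by linarith) (by linarith) (by norm_num)
  norm_num at h4 ⊢
  linarith

lemma cds18upR3 : ∫ t in Ioc (1:ℝ) (1.05:ℝ), Real.exp (-t^2) ≤ (0.01750437:ℝ) := by
  refine le_trans (exp_sq_piece 1 1.05 (by norm_num) (by norm_num)) ?_
  have h1 := cds18U41
  have h2 := cds18L42
  have h3 : Real.exp (-(2*(1:ℝ)*((1.05:ℝ)-(1:ℝ)))) ≤ 1 := by
    rw [← Real.exp_zero]; apply Real.exp_le_exp.2; norm_num
  have h4 : Real.exp (-(1:ℝ)^2) * (1 - Real.exp (-(2*(1:ℝ)*((1.05:ℝ)-(1:ℝ))))) ≤ (0.36788322:ℝ) * (1 - (0.90483741:ℝ)) :=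
    mul_le_mul h1 (by linarith) (by linarith) (by norm_num)
  norm_num at h4 ⊢
  linarith

lemma cds18upR4 : ∫ t in Ioc (1.05:ℝ) (1.1:ℝ), Real.exp (-t^2) ≤ (0.01576012:ℝ) := by
  refine le_trans (exp_sq_piece 1.05 1.1 (by norm_num) (by norm_num)) ?_
  have h1 := cds18U43
  have h2 := cds18L44
  have h3 : Real.exp (-(2*(1.05:ℝ)*((1.1:ℝ)-(1.05:ℝ)))) ≤ 1 := by
    rw [← Real.exp_zero]; apply Real.exp_le_exp.2; norm_num
  have h4 : Real.exp (-(1.05:ℝ)^2) * (1 - Real.exp (-(2*(1.05:ℝ)*((1.1:ℝ)-(1.05:ℝ))))) ≤ (0.33204004:ℝ) * (1 - (0.90032452:ℝ)) :=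
    mul_le_mul h1 (by linarith) (by linarith) (by norm_num)
  norm_num at h4 ⊢
  linarith

lemma cds18upR5 : ∫ t in Ioc (1.1:ℝ) (1.15:ℝ), Real.exp (-t^2) ≤ (0.01411909:ℝ) := by
  refine le_trans (exp_sq_piece 1.1 1.15 (by norm_num) (by norm_num)) ?_
  have h1 := cds18U45
  have h2 := cds18L46
  have h3 : Real.exp (-(2*(1.1:ℝ)*((1.15:ℝ)-(1.1:ℝ)))) ≤ 1 := by
    rw [← Real.exp_zero]; apply Real.exp_le_exp.2; norm_num
  have h4 : Real.exp (-(1.1:ℝ)^2) * (1 - Real.exp (-(2*(1.1:ℝ)*((1.15:ℝ)-(1.1:ℝ))))) ≤ (0.29819744:ℝ) * (1 - (0.89583413:ℝ)) :=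
    mul_le_mul h1 (by linarith) (by linarith) (by norm_num)
  norm_num at h4 ⊢
  linarith

lemma cds18upR6 : ∫ t in Ioc (1.15:ℝ) (1.2:ℝ), Real.exp (-t^2) ≤ (0.01258588:ℝ) := by
  refine le_trans (exp_sq_piece 1.15 1.2 (by norm_num) (by norm_num)) ?_
  have h1 := cds18U47
  have h2 := cds18L48
  have h3 : Real.exp (-(2*(1.15:ℝ)*((1.2:ℝ)-(1.15:ℝ)))) ≤ 1 := by
    rw [← Real.exp_zero]; apply Real.exp_le_exp.2; norm_num
  have h4 : Real.exp (-(1.15:ℝ)^2) * (1 - Real.exp (-(2*(1.15:ℝ)*((1.2:ℝ)-(1.15:ℝ))))) ≤ (0.26646858:ℝ) * (1 - (0.89136614:ℝ)) :=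
    mul_le_mul h1 (by linarith) (by linarith) (by norm_num)
  norm_num at h4 ⊢
  linarith

lemma cds18upR7 : ∫ t in Ioc (1.2:ℝ) (1.25:ℝ), Real.exp (-t^2) ≤ (0.01116323:ℝ) := by
  refine le_trans (exp_sq_piece 1.2 1.25 (by norm_num) (by norm_num)) ?_
  have h1 := cds18U49
  have h2 := cds18L50
  have h3 : Real.exp (-(2*(1.2:ℝ)*((1.25:ℝ)-(1.2:ℝ)))) ≤ 1 := by
    rw [← Real.exp_zero]; apply Real.exp_le_exp.2; norm_num
  have h4 : Real.exp (-(1.2:ℝ)^2) * (1 - Real.exp (-(2*(1.2:ℝ)*((1.25:ℝ)-(1.2:ℝ))))) ≤ (0.23692822:ℝ) * (1 - (0.88692043:ℝ)) :=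
    mul_le_mul h1 (by linarith) (by linarith) (by norm_num)
  norm_num at h4 ⊢
  linarith

lemma cds18upR8 : ∫ t in Ioc (1.25:ℝ) (1.3:ℝ), Real.exp (-t^2) ≤ (0.00985203:ℝ) := by
  refine le_trans (exp_sq_piece 1.25 1.3 (by norm_num) (by norm_num)) ?_
  have h1 := cds18U51
  have h2 := cds18L52
  have h3 : Real.exp (-(2*(1.25:ℝ)*((1.3:ℝ)-(1.25:ℝ)))) ≤ 1 := by
    rw [← Real.exp_zero]; apply Real.exp_le_exp.2; norm_num
  have h4 : Real.exp (-(1.25:ℝ)^2) * (1 - Real.exp (-(2*(1.25:ℝ)*((1.3:ℝ)-(1.25:ℝ))))) ≤ (0.20961212:ℝ) * (1 - (0.8824969:ℝ)) :=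
    mul_le_mul h1 (by linarith) (by linarith) (by norm_num)
  norm_num at h4 ⊢
  linarith

lemma cds18upR9 : ∫ t in Ioc (1.3:ℝ) (1.35:ℝ), Real.exp (-t^2) ≤ (0.00865151:ℝ) := by
  refine le_trans (exp_sq_piece 1.3 1.35 (by norm_num) (by norm_num)) ?_
  have h1 := cds18U53
  have h2 := cds18L54
  have h3 : Real.exp (-(2*(1.3:ℝ)*((1.35:ℝ)-(1.3:ℝ)))) ≤ 1 := by
    rw [← Real.exp_zero]; apply Real.exp_le_exp.2; norm_num
  have h4 : Real.exp (-(1.3:ℝ)^2) * (1 - Real.exp (-(2*(1.3:ℝ)*((1.35:ℝ)-(1.3:ℝ))))) ≤ (0.18452066:ℝ) * (1 - (0.87809543:ℝ)) :=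
    mul_le_mul h1 (by linarith) (by linarith) (by norm_num)
  norm_num at h4 ⊢
  linarith

lemma cds18upR10 : ∫ t in Ioc (1.35:ℝ) (1.4:ℝ), Real.exp (-t^2) ≤ (0.00755941:ℝ) := by
  refine le_trans (exp_sq_piece 1.35 1.4 (by norm_num) (by norm_num)) ?_
  have h1 := cds18U55
  have h2 := cds18L56
  have h3 : Real.exp (-(2*(1.35:ℝ)*((1.4:ℝ)-(1.35:ℝ)))) ≤ 1 := by
    rw [← Real.exp_zero]; apply Real.exp_le_exp.2; norm_num
  have h4 : Real.exp (-(1.35:ℝ)^2) * (1 - Real.exp (-(2*(1.35:ℝ)*((1.4:ℝ)-(1.35:ℝ))))) ≤ (0.16162291:ℝ) * (1 - (0.87371591:ℝ)) :=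
    mul_le_mul h1 (by linarith) (by linarith) (by norm_num)
  norm_num at h4 ⊢
  linarith

lemma cds18upR11 : ∫ t in Ioc (1.4:ℝ) (1.45:ℝ), Real.exp (-t^2) ≤ (0.00657226:ℝ) := by
  refine le_trans (exp_sq_piece 1.4 1.45 (by norm_num) (by norm_num)) ?_
  have h1 := cds18U57
  have h2 := cds18L58
  have h3 : Real.exp (-(2*(1.4:ℝ)*((1.45:ℝ)-(1.4:ℝ)))) ≤ 1 := by
    rw [← Real.exp_zero]; apply Real.exp_le_exp.2; norm_num
  have h4 : Real.exp (-(1.4:ℝ)^2) * (1 - Real.exp (-(2*(1.4:ℝ)*((1.45:ℝ)-(1.4:ℝ))))) ≤ (0.14086093:ℝ) * (1 - (0.86935823:ℝ)) :=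
    mul_le_mul h1 (by linarith) (by linarith) (by norm_num)
  norm_num at h4 ⊢
  linarith

lemma cds18upR12 : ∫ t in Ioc (1.45:ℝ) (1.5:ℝ), Real.exp (-t^2) ≤ (0.0056854:ℝ) := by
  refine le_trans (exp_sq_piece 1.45 1.5 (by norm_num) (by norm_num)) ?_
  have h1 := cds18U59
  have h2 := cds18L60
  have h3 : Real.exp (-(2*(1.45:ℝ)*((1.5:ℝ)-(1.45:ℝ)))) ≤ 1 := by
    rw [← Real.exp_zero]; apply Real.exp_le_exp.2; norm_num
  have h4 : Real.exp (-(1.45:ℝ)^2) * (1 - Real.exp (-(2*(1.45:ℝ)*((1.5:ℝ)-(1.45:ℝ))))) ≤ (0.12215097:ℝ) * (1 - (0.86502229:ℝ)) :=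
    mul_le_mul h1 (by linarith) (by linarith) (by norm_num)
  norm_num at h4 ⊢
  linarith

lemma cds18upR13 : ∫ t in Ioc (1.5:ℝ) (1.55:ℝ), Real.exp (-t^2) ≤ (0.00489378:ℝ) := by
  refine le_trans (exp_sq_piece 1.5 1.55 (by norm_num) (by norm_num)) ?_
  have h1 := cds18U61
  have h2 := cds18L62
  have h3 : Real.exp (-(2*(1.5:ℝ)*((1.55:ℝ)-(1.5:ℝ)))) ≤ 1 := by
    rw [← Real.exp_zero]; apply Real.exp_le_exp.2; norm_num
  have h4 : Real.exp (-(1.5:ℝ)^2) * (1 - Real.exp (-(2*(1.5:ℝ)*((1.55:ℝ)-(1.5:ℝ))))) ≤ (0.10539964:ℝ) * (1 - (0.86070797:ℝ)) :=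
    mul_le_mul h1 (by linarith) (by linarith) (by norm_num)
  norm_num at h4 ⊢
  linarith

lemma cds18upR14 : ∫ t in Ioc (1.55:ℝ) (1.6:ℝ), Real.exp (-t^2) ≤ (0.00419139:ℝ) := by
  refine le_trans (exp_sq_piece 1.55 1.6 (by norm_num) (by norm_num)) ?_
  have h1 := cds18U63
  have h2 := cds18L64
  have h3 : Real.exp (-(2*(1.55:ℝ)*((1.6:ℝ)-(1.55:ℝ)))) ≤ 1 := by
    rw [← Real.exp_zero]; apply Real.exp_le_exp.2; norm_num
  have h4 : Real.exp (-(1.55:ℝ)^2) * (1 - Real.exp (-(2*(1.55:ℝ)*((1.6:ℝ)-(1.55:ℝ))))) ≤ (0.09049201:ℝ) * (1 - (0.85641517:ℝ)) :=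
    mul_le_mul h1 (by linarith) (by linarith) (by norm_num)
  norm_num at h4 ⊢
  linarith

lemma cds18upR15 : ∫ t in Ioc (1.6:ℝ) (1.65:ℝ), Real.exp (-t^2) ≤ (0.00357191:ℝ) := by
  refine le_trans (exp_sq_piece 1.6 1.65 (by norm_num) (by norm_num)) ?_
  have h1 := cds18U65
  have h2 := cds18L66
  have h3 : Real.exp (-(2*(1.6:ℝ)*((1.65:ℝ)-(1.6:ℝ)))) ≤ 1 := by
    rw [← Real.exp_zero]; apply Real.exp_le_exp.2; norm_num
  have h4 : Real.exp (-(1.6:ℝ)^2) * (1 - Real.exp (-(2*(1.6:ℝ)*((1.65:ℝ)-(1.6:ℝ))))) ≤ (0.07730551:ℝ) * (1 - (0.85214378:ℝ)) :=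
    mul_le_mul h1 (by linarith) (by linarith) (by norm_num)
  norm_num at h4 ⊢
  linarith

lemma cds18upR16 : ∫ t in Ioc (1.65:ℝ) (1.7:ℝ), Real.exp (-t^2) ≤ (0.00302882:ℝ) := by
  refine le_trans (exp_sq_piece 1.65 1.7 (by norm_num) (by norm_num)) ?_
  have h1 := cds18U67
  have h2 := cds18L68
  have h3 : Real.exp (-(2*(1.65:ℝ)*((1.7:ℝ)-(1.65:ℝ)))) ≤ 1 := by
    rw [← Real.exp_zero]; apply Real.exp_le_exp.2; norm_num
  have h4 : Real.exp (-(1.65:ℝ)^2) * (1 - Real.exp (-(2*(1.65:ℝ)*((1.7:ℝ)-(1.65:ℝ))))) ≤ (0.06571129:ℝ) * (1 - (0.8478937:ℝ)) :=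
    mul_le_mul h1 (by linarith) (by linarith) (by norm_num)
  norm_num at h4 ⊢
  linarith

lemma cds18upR17 : ∫ t in Ioc (1.7:ℝ) (1.75:ℝ), Real.exp (-t^2) ≤ (0.00255551:ℝ) := by
  refine le_trans (exp_sq_piece 1.7 1.75 (by norm_num) (by norm_num)) ?_
  have h1 := cds18U69
  have h2 := cds18L70
  have h3 : Real.exp (-(2*(1.7:ℝ)*((1.75:ℝ)-(1.7:ℝ)))) ≤ 1 := by
    rw [← Real.exp_zero]; apply Real.exp_le_exp.2; norm_num
  have h4 : Real.exp (-(1.7:ℝ)^2) * (1 - Real.exp (-(2*(1.7:ℝ)*((1.75:ℝ)-(1.7:ℝ))))) ≤ (0.05557753:ℝ) * (1 - (0.84366481:ℝ)) :=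
    mul_le_mul h1 (by linarith) (by linarith) (by norm_num)
  norm_num at h4 ⊢
  linarith

lemma cds18upR18 : ∫ t in Ioc (1.75:ℝ) (1.8:ℝ), Real.exp (-t^2) ≤ (0.00214536:ℝ) := by
  refine le_trans (exp_sq_piece 1.75 1.8 (by norm_num) (by norm_num)) ?_
  have h1 := cds18U71
  have h2 := cds18L72
  have h3 : Real.exp (-(2*(1.75:ℝ)*((1.8:ℝ)-(1.75:ℝ)))) ≤ 1 := by
    rw [← Real.exp_zero]; apply Real.exp_le_exp.2; norm_num
  have h4 : Real.exp (-(1.75:ℝ)^2) * (1 - Real.exp (-(2*(1.75:ℝ)*((1.8:ℝ)-(1.75:ℝ))))) ≤ (0.04677091:ℝ) * (1 - (0.83945702:ℝ)) :=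
    mul_le_mul h1 (by linarith) (by linarith) (by norm_num)
  norm_num at h4 ⊢
  linarith

lemma cds18upR19 : ∫ t in Ioc (1.8:ℝ) (1.85:ℝ), Real.exp (-t^2) ≤ (0.00179209:ℝ) := by
  refine le_trans (exp_sq_piece 1.8 1.85 (by norm_num) (by norm_num)) ?_
  have h1 := cds18U73
  have h2 := cds18L74
  have h3 : Real.exp (-(2*(1.8:ℝ)*((1.85:ℝ)-(1.8:ℝ)))) ≤ 1 := by
    rw [← Real.exp_zero]; apply Real.exp_le_exp.2; norm_num
  have h4 : Real.exp (-(1.8:ℝ)^2) * (1 - Real.exp (-(2*(1.8:ℝ)*((1.85:ℝ)-(1.8:ℝ))))) ≤ (0.03916425:ℝ) * (1 - (0.83527021:ℝ)) :=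
    mul_le_mul h1 (by linarith) (by linarith) (by norm_num)
  norm_num at h4 ⊢
  linarith

lemma cds18upR20 : ∫ t in Ioc (1.85:ℝ) (1.9:ℝ), Real.exp (-t^2) ≤ (0.00148954:ℝ) := by
  refine le_trans (exp_sq_piece 1.85 1.9 (by norm_num) (by norm_num)) ?_
  have h1 := cds18U75
  have h2 := cds18L76
  have h3 : Real.exp (-(2*(1.85:ℝ)*((1.9:ℝ)-(1.85:ℝ)))) ≤ 1 := by
    rw [← Real.exp_zero]; apply Real.exp_le_exp.2; norm_num
  have h4 : Real.exp (-(1.85:ℝ)^2) * (1 - Real.exp (-(2*(1.85:ℝ)*((1.9:ℝ)-(1.85:ℝ))))) ≤ (0.0326312:ℝ) * (1 - (0.83110428:ℝ)) :=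
    mul_le_mul h1 (by linarith) (by linarith) (by norm_num)
  norm_num at h4 ⊢
  linarith

lemma cds18upR21 : ∫ t in Ioc (1.9:ℝ) (1.95:ℝ), Real.exp (-t^2) ≤ (0.00123189:ℝ) := by
  refine le_trans (exp_sq_piece 1.9 1.95 (by norm_num) (by norm_num)) ?_
  have h1 := cds18U77
  have h2 := cds18L78
  have h3 : Real.exp (-(2*(1.9:ℝ)*((1.95:ℝ)-(1.9:ℝ)))) ≤ 1 := by
    rw [← Real.exp_zero]; apply Real.exp_le_exp.2; norm_num
  have h4 : Real.exp (-(1.9:ℝ)^2) * (1 - Real.exp (-(2*(1.9:ℝ)*((1.95:ℝ)-(1.9:ℝ))))) ≤ (0.02705238:ℝ) * (1 - (0.82695913:ℝ)) :=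
    mul_le_mul h1 (by linarith) (by linarith) (by norm_num)
  norm_num at h4 ⊢
  linarith

lemma cds18upR22 : ∫ t in Ioc (1.95:ℝ) (2:ℝ), Real.exp (-t^2) ≤ (0.00101373:ℝ) := by
  refine le_trans (exp_sq_piece 1.95 2 (by norm_num) (by norm_num)) ?_
  have h1 := cds18U79
  have h2 := cds18L80
  have h3 : Real.exp (-(2*(1.95:ℝ)*((2:ℝ)-(1.95:ℝ)))) ≤ 1 := by
    rw [← Real.exp_zero]; apply Real.exp_le_exp.2; norm_num
  have h4 : Real.exp (-(1.95:ℝ)^2) * (1 - Real.exp (-(2*(1.95:ℝ)*((2:ℝ)-(1.95:ℝ))))) ≤ (0.02231556:ℝ) * (1 - (0.82283465:ℝ)) :=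
    mul_le_mul h1 (by linarith) (by linarith) (by norm_num)
  norm_num at h4 ⊢
  linarith

lemma cds18upR23 : ∫ t in Ioc (2:ℝ) (2.05:ℝ), Real.exp (-t^2) ≤ (0.00083006:ℝ) := by
  refine le_trans (exp_sq_piece 2 2.05 (by norm_num) (by norm_num)) ?_
  have h1 := cds18U81
  have h2 := cds18L82
  have h3 : Real.exp (-(2*(2:ℝ)*((2.05:ℝ)-(2:ℝ)))) ≤ 1 := by
    rw [← Real.exp_zero]; apply Real.exp_le_exp.2; norm_num
  have h4 : Real.exp (-(2:ℝ)^2) * (1 - Real.exp (-(2*(2:ℝ)*((2.05:ℝ)-(2:ℝ))))) ≤ (0.0183164:ℝ) * (1 - (0.81873075:ℝ)) :=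
    mul_le_mul h1 (by linarith) (by linarith) (by norm_num)
  norm_num at h4 ⊢
  linarith

lemma cds18upR24 : ∫ t in Ioc (2.05:ℝ) (2.1:ℝ), Real.exp (-t^2) ≤ (0.00067624:ℝ) := by
  refine le_trans (exp_sq_piece 2.05 2.1 (by norm_num) (by norm_num)) ?_
  have h1 := cds18U83
  have h2 := cds18L84
  have h3 : Real.exp (-(2*(2.05:ℝ)*((2.1:ℝ)-(2.05:ℝ)))) ≤ 1 := by
    rw [← Real.exp_zero]; apply Real.exp_le_exp.2; norm_num
  have h4 : Real.exp (-(2.05:ℝ)^2) * (1 - Real.exp (-(2*(2.05:ℝ)*((2.1:ℝ)-(2.05:ℝ))))) ≤ (0.01495836:ℝ) * (1 - (0.81464731:ℝ)) :=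
    mul_le_mul h1 (by linarith) (by linarith) (by norm_num)
  norm_num at h4 ⊢
  linarith

lemma cds18upR25 : ∫ t in Ioc (2.1:ℝ) (2.15:ℝ), Real.exp (-t^2) ≤ (0.0005482:ℝ) := by
  refine le_trans (exp_sq_piece 2.1 2.15 (by norm_num) (by norm_num)) ?_
  have h1 := cds18U85
  have h2 := cds18L86
  have h3 : Real.exp (-(2*(2.1:ℝ)*((2.15:ℝ)-(2.1:ℝ)))) ≤ 1 := by
    rw [← Real.exp_zero]; apply Real.exp_le_exp.2; norm_num
  have h4 : Real.exp (-(2.1:ℝ)^2) * (1 - Real.exp (-(2*(2.1:ℝ)*((2.15:ℝ)-(2.1:ℝ))))) ≤ (0.01215544:ℝ) * (1 - (0.81058424:ℝ)) :=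
    mul_le_mul h1 (by linarith) (by linarith) (by norm_num)
  norm_num at h4 ⊢
  linarith

lemma cds18upR26 : ∫ t in Ioc (2.15:ℝ) (2.2:ℝ), Real.exp (-t^2) ≤ (0.00044219:ℝ) := by
  refine le_trans (exp_sq_piece 2.15 2.2 (by norm_num) (by norm_num)) ?_
  have h1 := cds18U87
  have h2 := cds18L88
  have h3 : Real.exp (-(2*(2.15:ℝ)*((2.2:ℝ)-(2.15:ℝ)))) ≤ 1 := by
    rw [← Real.exp_zero]; apply Real.exp_le_exp.2; norm_num
  have h4 : Real.exp (-(2.15:ℝ)^2) * (1 - Real.exp (-(2*(2.15:ℝ)*((2.2:ℝ)-(2.15:ℝ))))) ≤ (0.00982849:ℝ) * (1 - (0.80654143:ℝ)) :=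
    mul_le_mul h1 (by linarith) (by linarith) (by norm_num)
  norm_num at h4 ⊢
  linarith

set_option maxHeartbeats 2000000 in
lemma cds18sumL : ∫ t in Ioc (0.5:ℝ) (0.79:ℝ), Real.exp (-t^2) ≤ (0.1912241:ℝ) := by
  have g5 : ∫ t in Ioc (0.75:ℝ) (0.79:ℝ), Real.exp (-t^2) ≤ (0.02212106:ℝ) := cds18upL5
  have g4 : ∫ t in Ioc (0.7:ℝ) (0.79:ℝ), Real.exp (-t^2) ≤ (0.05170488:ℝ) := by
    rw [Ioc_split _ (by norm_num : (0.7:ℝ) ≤ 0.75) (by norm_num : (0.75:ℝ) ≤ 0.79) integrable_gauss1.integrableOn]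
    linarith [cds18upL4, g5]
  have g3 : ∫ t in Ioc (0.65:ℝ) (0.79:ℝ), Real.exp (-t^2) ≤ (0.08343287:ℝ) := by
    rw [Ioc_split _ (by norm_num : (0.65:ℝ) ≤ 0.7) (by norm_num : (0.7:ℝ) ≤ 0.79) integrable_gauss1.integrableOn]
    linarith [cds18upL3, g4]
  have g2 : ∫ t in Ioc (0.6:ℝ) (0.79:ℝ), Real.exp (-t^2) ≤ (0.1172908:ℝ) := by
    rw [Ioc_split _ (by norm_num : (0.6:ℝ) ≤ 0.65) (by norm_num : (0.65:ℝ) ≤ 0.79) integrable_gauss1.integrableOn]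
    linarith [cds18upL2, g3]
  have g1 : ∫ t in Ioc (0.55:ℝ) (0.79:ℝ), Real.exp (-t^2) ≤ (0.15324153:ℝ) := by
    rw [Ioc_split _ (by norm_num : (0.55:ℝ) ≤ 0.6) (by norm_num : (0.6:ℝ) ≤ 0.79) integrable_gauss1.integrableOn]
    linarith [cds18upL1, g2]
  have g0 : ∫ t in Ioc (0.5:ℝ) (0.79:ℝ), Real.exp (-t^2) ≤ (0.1912241:ℝ) := by
    rw [Ioc_split _ (by norm_num : (0.5:ℝ) ≤ 0.55) (by norm_num : (0.55:ℝ) ≤ 0.79) integrable_gauss1.integrableOn]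
    linarith [cds18upL0, g1]
  exact g0

set_option maxHeartbeats 2000000 in
lemma cds18sumR : ∫ t in Ioc (0.85:ℝ) (2.2:ℝ), Real.exp (-t^2) ≤ (0.20175355:ℝ) := by
  have g26 : ∫ t in Ioc (2.15:ℝ) (2.2:ℝ), Real.exp (-t^2) ≤ (0.00044219:ℝ) := cds18upR26
  have g25 : ∫ t in Ioc (2.1:ℝ) (2.2:ℝ), Real.exp (-t^2) ≤ (0.00099039:ℝ) := by
    rw [Ioc_split _ (by norm_num : (2.1:ℝ) ≤ 2.15) (by norm_num : (2.15:ℝ) ≤ 2.2) integrable_gauss1.integrableOn]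
    linarith [cds18upR25, g26]
  have g24 : ∫ t in Ioc (2.05:ℝ) (2.2:ℝ), Real.exp (-t^2) ≤ (0.00166663:ℝ) := by
    rw [Ioc_split _ (by norm_num : (2.05:ℝ) ≤ 2.1) (by norm_num : (2.1:ℝ) ≤ 2.2) integrable_gauss1.integrableOn]
    linarith [cds18upR24, g25]
  have g23 : ∫ t in Ioc (2:ℝ) (2.2:ℝ), Real.exp (-t^2) ≤ (0.00249669:ℝ) := by
    rw [Ioc_split _ (by norm_num : (2:ℝ) ≤ 2.05) (by norm_num : (2.05:ℝ) ≤ 2.2) integrable_gauss1.integrableOn]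
    linarith [cds18upR23, g24]
  have g22 : ∫ t in Ioc (1.95:ℝ) (2.2:ℝ), Real.exp (-t^2) ≤ (0.00351042:ℝ) := by
    rw [Ioc_split _ (by norm_num : (1.95:ℝ) ≤ 2) (by norm_num : (2:ℝ) ≤ 2.2) integrable_gauss1.integrableOn]
    linarith [cds18upR22, g23]
  have g21 : ∫ t in Ioc (1.9:ℝ) (2.2:ℝ), Real.exp (-t^2) ≤ (0.00474231:ℝ) := by
    rw [Ioc_split _ (by norm_num : (1.9:ℝ) ≤ 1.95) (by norm_num : (1.95:ℝ) ≤ 2.2) integrable_gauss1.integrableOn]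
    linarith [cds18upR21, g22]
  have g20 : ∫ t in Ioc (1.85:ℝ) (2.2:ℝ), Real.exp (-t^2) ≤ (0.00623185:ℝ) := by
    rw [Ioc_split _ (by norm_num : (1.85:ℝ) ≤ 1.9) (by norm_num : (1.9:ℝ) ≤ 2.2) integrable_gauss1.integrableOn]
    linarith [cds18upR20, g21]
  have g19 : ∫ t in Ioc (1.8:ℝ) (2.2:ℝ), Real.exp (-t^2) ≤ (0.00802394:ℝ) := by
    rw [Ioc_split _ (by norm_num : (1.8:ℝ) ≤ 1.85) (by norm_num : (1.85:ℝ) ≤ 2.2) integrable_gauss1.integrableOn]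
    linarith [cds18upR19, g20]
  have g18 : ∫ t in Ioc (1.75:ℝ) (2.2:ℝ), Real.exp (-t^2) ≤ (0.0101693:ℝ) := by
    rw [Ioc_split _ (by norm_num : (1.75:ℝ) ≤ 1.8) (by norm_num : (1.8:ℝ) ≤ 2.2) integrable_gauss1.integrableOn]
    linarith [cds18upR18, g19]
  have g17 : ∫ t in Ioc (1.7:ℝ) (2.2:ℝ), Real.exp (-t^2) ≤ (0.01272481:ℝ) := by
    rw [Ioc_split _ (by norm_num : (1.7:ℝ) ≤ 1.75) (by norm_num : (1.75:ℝ) ≤ 2.2) integrable_gauss1.integrableOn]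
    linarith [cds18upR17, g18]
  have g16 : ∫ t in Ioc (1.65:ℝ) (2.2:ℝ), Real.exp (-t^2) ≤ (0.01575363:ℝ) := by
    rw [Ioc_split _ (by norm_num : (1.65:ℝ) ≤ 1.7) (by norm_num : (1.7:ℝ) ≤ 2.2) integrable_gauss1.integrableOn]
    linarith [cds18upR16, g17]
  have g15 : ∫ t in Ioc (1.6:ℝ) (2.2:ℝ), Real.exp (-t^2) ≤ (0.01932554:ℝ) := by
    rw [Ioc_split _ (by norm_num : (1.6:ℝ) ≤ 1.65) (by norm_num : (1.65:ℝ) ≤ 2.2) integrable_gauss1.integrableOn]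
    linarith [cds18upR15, g16]
  have g14 : ∫ t in Ioc (1.55:ℝ) (2.2:ℝ), Real.exp (-t^2) ≤ (0.02351693:ℝ) := by
    rw [Ioc_split _ (by norm_num : (1.55:ℝ) ≤ 1.6) (by norm_num : (1.6:ℝ) ≤ 2.2) integrable_gauss1.integrableOn]
    linarith [cds18upR14, g15]
  have g13 : ∫ t in Ioc (1.5:ℝ) (2.2:ℝ), Real.exp (-t^2) ≤ (0.02841071:ℝ) := by
    rw [Ioc_split _ (by norm_num : (1.5:ℝ) ≤ 1.55) (by norm_num : (1.55:ℝ) ≤ 2.2) integrable_gauss1.integrableOn]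
    linarith [cds18upR13, g14]
  have g12 : ∫ t in Ioc (1.45:ℝ) (2.2:ℝ), Real.exp (-t^2) ≤ (0.03409611:ℝ) := by
    rw [Ioc_split _ (by norm_num : (1.45:ℝ) ≤ 1.5) (by norm_num : (1.5:ℝ) ≤ 2.2) integrable_gauss1.integrableOn]
    linarith [cds18upR12, g13]
  have g11 : ∫ t in Ioc (1.4:ℝ) (2.2:ℝ), Real.exp (-t^2) ≤ (0.04066837:ℝ) := by
    rw [Ioc_split _ (by norm_num : (1.4:ℝ) ≤ 1.45) (by norm_num : (1.45:ℝ) ≤ 2.2) integrable_gauss1.integrableOn]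
    linarith [cds18upR11, g12]
  have g10 : ∫ t in Ioc (1.35:ℝ) (2.2:ℝ), Real.exp (-t^2) ≤ (0.04822778:ℝ) := by
    rw [Ioc_split _ (by norm_num : (1.35:ℝ) ≤ 1.4) (by norm_num : (1.4:ℝ) ≤ 2.2) integrable_gauss1.integrableOn]
    linarith [cds18upR10, g11]
  have g9 : ∫ t in Ioc (1.3:ℝ) (2.2:ℝ), Real.exp (-t^2) ≤ (0.05687929:ℝ) := by
    rw [Ioc_split _ (by norm_num : (1.3:ℝ) ≤ 1.35) (by norm_num : (1.35:ℝ) ≤ 2.2) integrable_gauss1.integrableOn]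
    linarith [cds18upR9, g10]
  have g8 : ∫ t in Ioc (1.25:ℝ) (2.2:ℝ), Real.exp (-t^2) ≤ (0.06673132:ℝ) := by
    rw [Ioc_split _ (by norm_num : (1.25:ℝ) ≤ 1.3) (by norm_num : (1.3:ℝ) ≤ 2.2) integrable_gauss1.integrableOn]
    linarith [cds18upR8, g9]
  have g7 : ∫ t in Ioc (1.2:ℝ) (2.2:ℝ), Real.exp (-t^2) ≤ (0.07789455:ℝ) := by
    rw [Ioc_split _ (by norm_num : (1.2:ℝ) ≤ 1.25) (by norm_num : (1.25:ℝ) ≤ 2.2) integrable_gauss1.integrableOn]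
    linarith [cds18upR7, g8]
  have g6 : ∫ t in Ioc (1.15:ℝ) (2.2:ℝ), Real.exp (-t^2) ≤ (0.09048043:ℝ) := by
    rw [Ioc_split _ (by norm_num : (1.15:ℝ) ≤ 1.2) (by norm_num : (1.2:ℝ) ≤ 2.2) integrable_gauss1.integrableOn]
    linarith [cds18upR6, g7]
  have g5 : ∫ t in Ioc (1.1:ℝ) (2.2:ℝ), Real.exp (-t^2) ≤ (0.10459952:ℝ) := by
    rw [Ioc_split _ (by norm_num : (1.1:ℝ) ≤ 1.15) (by norm_num : (1.15:ℝ) ≤ 2.2) integrable_gauss1.integrableOn]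
    linarith [cds18upR5, g6]
  have g4 : ∫ t in Ioc (1.05:ℝ) (2.2:ℝ), Real.exp (-t^2) ≤ (0.12035964:ℝ) := by
    rw [Ioc_split _ (by norm_num : (1.05:ℝ) ≤ 1.1) (by norm_num : (1.1:ℝ) ≤ 2.2) integrable_gauss1.integrableOn]
    linarith [cds18upR4, g5]
  have g3 : ∫ t in Ioc (1:ℝ) (2.2:ℝ), Real.exp (-t^2) ≤ (0.13786401:ℝ) := by
    rw [Ioc_split _ (by norm_num : (1:ℝ) ≤ 1.05) (by norm_num : (1.05:ℝ) ≤ 2.2) integrable_gauss1.integrableOn]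
    linarith [cds18upR3, g4]
  have g2 : ∫ t in Ioc (0.95:ℝ) (2.2:ℝ), Real.exp (-t^2) ≤ (0.15720843:ℝ) := by
    rw [Ioc_split _ (by norm_num : (0.95:ℝ) ≤ 1) (by norm_num : (1:ℝ) ≤ 2.2) integrable_gauss1.integrableOn]
    linarith [cds18upR2, g3]
  have g1 : ∫ t in Ioc (0.9:ℝ) (2.2:ℝ), Real.exp (-t^2) ≤ (0.17847982:ℝ) := by
    rw [Ioc_split _ (by norm_num : (0.9:ℝ) ≤ 0.95) (by norm_num : (0.95:ℝ) ≤ 2.2) integrable_gauss1.integrableOn]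
    linarith [cds18upR1, g2]
  have g0 : ∫ t in Ioc (0.85:ℝ) (2.2:ℝ), Real.exp (-t^2) ≤ (0.20175355:ℝ) := by
    rw [Ioc_split _ (by norm_num : (0.85:ℝ) ≤ 0.9) (by norm_num : (0.9:ℝ) ≤ 2.2) integrable_gauss1.integrableOn]
    linarith [cds18upR0, g1]
  exact g0

/- ### Case A : `x ≥ 0.85` -/

lemma cds18caseA (x : ℝ) (hx : (0.85:ℝ) ≤ x) :
    2 / Real.sqrt Real.pi * ∫ t in Ioi x, Real.exp (-t^2) ≤
      Real.exp (-x^2)/6 + Real.exp (-4*x^2/3)/2 := by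
  rw [← int_B x, ← integral_const_mul]
  refine setIntegral_mono_on ((integrable_gauss1.const_mul _).integrableOn)
    integrable_B.integrableOn measurableSet_Ioi ?_
  intro t ht
  exact cds18ptP t (le_trans hx ht.out.le)

/- ### Step 1 : quantitative bound at `0.85` -/

lemma cds18step1 :
    2 / Real.sqrt Real.pi * ∫ t in Ioi (0.85:ℝ), Real.exp (-t^2) ≤
      Real.exp (-(0.85:ℝ)^2)/6 + Real.exp (-4*(0.85:ℝ)^2/3)/2 - 0.03575323 := by
  have hsplit : ∫ t in Ioi (0.85:ℝ), Real.exp (-t^2) =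
      (∫ t in Ioc (0.85:ℝ) (2.2:ℝ), Real.exp (-t^2)) + ∫ t in Ioi (2.2:ℝ), Real.exp (-t^2) :=
    Ioi_split _ (by norm_num) integrable_gauss1.integrableOn
  have htail := cds18caseA 2.2 (by norm_num)
  have hmid := cds18sumR
  have hq := q_up
  have hq0 : (0:ℝ) ≤ 2 / Real.sqrt Real.pi := by positivity
  have hmid0 : 0 ≤ ∫ t in Ioc (0.85:ℝ) (2.2:ℝ), Real.exp (-t^2) :=
    setIntegral_nonneg measurableSet_Ioc (fun t _ => (Real.exp_pos _).le)
  have hPc1 := cds18L93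
  have hPc2 := cds18L94
  have hPe1 := cds18U95
  have hPe2 := cds18U96
  rw [hsplit, mul_add]
  have h1 : 2 / Real.sqrt Real.pi * ∫ t in Ioc (0.85:ℝ) (2.2:ℝ), Real.exp (-t^2) ≤
      1.12838 * 0.20175355 := by nlinarith
  nlinarith [htail]

/- ### main theorem -/

theorem stmt18 (x : ℝ) (hx : 1 / 2 ≤ x) :
    (2 / Real.sqrt Real.pi) * ∫ t in Set.Ioi x, Real.exp (-t ^ 2) ≤
      Real.exp (-x ^ 2) / 6 + Real.exp (-4 * x ^ 2 / 3) / 2 := by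
  rcases le_or_gt (0.85:ℝ) x with hc|hc
  · exact cds18caseA x hc
  have hq0 : (0:ℝ) ≤ 2 / Real.sqrt Real.pi := by positivity
  have hq := q_up
  have hIe : ∫ t in Ioi x, Real.exp (-t^2) =
      (∫ t in Ioc x (0.85:ℝ), Real.exp (-t^2)) + ∫ t in Ioi (0.85:ℝ), Real.exp (-t^2) :=
    Ioi_split _ hc.le integrable_gauss1.integrableOn
  have hIB : ∫ t in Ioi x, (t/3 * Real.exp (-t^2) + 4*t/3 * Real.exp (-4*t^2/3)) =
      (∫ t in Ioc x (0.85:ℝ), (t/3 * Real.exp (-t^2) + 4*t/3 * Real.exp (-4*t^2/3))) +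
      ∫ t in Ioi (0.85:ℝ), (t/3 * Real.exp (-t^2) + 4*t/3 * Real.exp (-4*t^2/3)) :=
    Ioi_split _ hc.le integrable_B.integrableOn
  have hBx := int_B x
  have hBc := int_B 0.85
  -- the key bound on the middle piece
  have hgeint : Integrable (fun t : ℝ => 2 / Real.sqrt Real.pi * Real.exp (-t^2) -
      (t/3 * Real.exp (-t^2) + 4*t/3 * Real.exp (-4*t^2/3))) :=
    (integrable_gauss1.const_mul _).sub integrable_B
  have hki : ∀ a b : ℝ,
      (∫ t in Ioc a b, (2 / Real.sqrt Real.pi * Real.exp (-t^2) -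
        (t/3 * Real.exp (-t^2) + 4*t/3 * Real.exp (-4*t^2/3)))) =
      2 / Real.sqrt Real.pi * (∫ t in Ioc a b, Real.exp (-t^2)) -
        ∫ t in Ioc a b, (t/3 * Real.exp (-t^2) + 4*t/3 * Real.exp (-4*t^2/3)) := by
    intro a b
    rw [integral_sub ((integrable_gauss1.const_mul _).integrableOn) integrable_B.integrableOn,
      integral_const_mul]
  have key : (∫ t in Ioc x (0.85:ℝ), (2 / Real.sqrt Real.pi * Real.exp (-t^2) -
      (t/3 * Real.exp (-t^2) + 4*t/3 * Real.exp (-4*t^2/3)))) ≤ 0.03575323 := by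
    rcases le_or_gt x (0.79:ℝ) with hd|hd
    · -- split at 0.79
      rw [Ioc_split _ hd (by norm_num) hgeint.integrableOn]
      have part1 : (∫ t in Ioc x (0.79:ℝ), (2 / Real.sqrt Real.pi * Real.exp (-t^2) -
          (t/3 * Real.exp (-t^2) + 4*t/3 * Real.exp (-4*t^2/3)))) ≤ 0.03455888 := by
        have hmono : (∫ t in Ioc x (0.79:ℝ), (2 / Real.sqrt Real.pi * Real.exp (-t^2) -
            (t/3 * Real.exp (-t^2) + 4*t/3 * Real.exp (-4*t^2/3)))) ≤
            ∫ t in Ioc (1/2:ℝ) (0.79:ℝ), (2 / Real.sqrt Real.pi * Real.exp (-t^2) -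
            (t/3 * Real.exp (-t^2) + 4*t/3 * Real.exp (-4*t^2/3))) := by
          refine setIntegral_mono_set hgeint.integrableOn ?_
            (HasSubset.Subset.eventuallyLE (Ioc_subset_Ioc_left hx))
          filter_upwards [ae_restrict_mem measurableSet_Ioc] with t ht
          simpa using sub_nonneg.2 (cds18ptG0 t ht)
        refine le_trans hmono ?_
        rw [hki]
        have hBv : ∫ t in Ioc (1/2:ℝ) (0.79:ℝ),
            (t/3 * Real.exp (-t^2) + 4*t/3 * Real.exp (-4*t^2/3)) =
            (Real.exp (-(1/2:ℝ)^2)/6 + Real.exp (-4*(1/2:ℝ)^2/3)/2) -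
            (Real.exp (-(0.79:ℝ)^2)/6 + Real.exp (-4*(0.79:ℝ)^2/3)/2) := by
          have h := Ioi_split (fun t : ℝ => t/3 * Real.exp (-t^2) + 4*t/3 * Real.exp (-4*t^2/3))
            (by norm_num : (1/2:ℝ) ≤ 0.79) integrable_B.integrableOn
          rw [int_B, int_B] at h
          linarith
        rw [hBv]
        have hInt0 : 0 ≤ ∫ t in Ioc (1/2:ℝ) (0.79:ℝ), Real.exp (-t^2) :=
          setIntegral_nonneg measurableSet_Ioc (fun t _ => (Real.exp_pos _).le)
        have hIntU := cds18sumL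
        have hL1 := cds18L89
        have hL2 := cds18L90
        have hU1 := cds18U91
        have hU2 := cds18U92
        nlinarith
      have part2 : (∫ t in Ioc (0.79:ℝ) (0.85:ℝ), (2 / Real.sqrt Real.pi * Real.exp (-t^2) -
          (t/3 * Real.exp (-t^2) + 4*t/3 * Real.exp (-4*t^2/3)))) ≤ 0.00119435 := by
        have h2 : (∫ t in Ioc (0.79:ℝ) (0.85:ℝ), (2 / Real.sqrt Real.pi * Real.exp (-t^2) -
            (t/3 * Real.exp (-t^2) + 4*t/3 * Real.exp (-4*t^2/3)))) ≤
            ∫ _ in Ioc (0.79:ℝ) (0.85:ℝ), (0.01990583:ℝ) := by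
          refine setIntegral_mono_on hgeint.integrableOn
            (integrableOn_const (ne_of_lt ?_)) measurableSet_Ioc cds18ptSL
          rw [Real.volume_Ioc]
          exact ENNReal.ofReal_lt_top
        refine le_trans h2 ?_
        rw [setIntegral_const, Real.volume_real_Ioc_of_le (by norm_num), smul_eq_mul]
        norm_num
      linarith
    · -- 0.79 < x < 0.85 : sliver only
      have h2 : (∫ t in Ioc x (0.85:ℝ), (2 / Real.sqrt Real.pi * Real.exp (-t^2) -
          (t/3 * Real.exp (-t^2) + 4*t/3 * Real.exp (-4*t^2/3)))) ≤
          ∫ _ in Ioc x (0.85:ℝ), (0.01990583:ℝ) := by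
        refine setIntegral_mono_on hgeint.integrableOn
          (integrableOn_const (ne_of_lt ?_)) measurableSet_Ioc ?_
        · rw [Real.volume_Ioc]
          exact ENNReal.ofReal_lt_top
        · intro t ht
          exact cds18ptSL t ⟨lt_trans hd ht.1, ht.2⟩
      refine le_trans h2 ?_
      rw [setIntegral_const, Real.volume_real_Ioc_of_le (by linarith : x ≤ (0.85:ℝ)), smul_eq_mul]
      nlinarith
  have hstep := cds18step1
  rw [hki] at key
  have hgoal : (2 / Real.sqrt Real.pi) * ∫ t in Set.Ioi x, Real.exp (-t ^ 2) =
      2 / Real.sqrt Real.pi * (∫ t in Ioc x (0.85:ℝ), Real.exp (-t^2)) +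
      2 / Real.sqrt Real.pi * ∫ t in Ioi (0.85:ℝ), Real.exp (-t^2) := by
    rw [show (fun t : ℝ => Real.exp (-t ^ 2)) = (fun t : ℝ => Real.exp (-t^2)) from rfl]
    rw [hIe, mul_add]
  rw [hgoal]
  have hfin : Real.exp (-x ^ 2) / 6 + Real.exp (-4 * x ^ 2 / 3) / 2 =
      (∫ t in Ioc x (0.85:ℝ), (t/3 * Real.exp (-t^2) + 4*t/3 * Real.exp (-4*t^2/3))) +
      (Real.exp (-(0.85:ℝ)^2)/6 + Real.exp (-4*(0.85:ℝ)^2/3)/2) := by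
    rw [← hBc, ← hIB] at *
    linarith [hBx]
  linarith [key, hstep, hfin.ge, hfin.le]
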